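/- arXiv:2310.05179 — 6 statements merged into one kernel-verified Lean document; each statement's English description precedes it below -/
import Mathlib

section
/- Let S ⊆ ℝ be a nonempty finite set, G > 0, and σ ∈ ℝ. Let f_1, f_2 : S → ℝ be such that the function f_1 − f_2 is G-Lipschitz on S (i.e., |(f_1 − f_2)(x) − (f_1 − f_2)(y)| ≤ G|x − y| for all x, y ∈ S). If α_1 ∈ argmin_{α ∈ S} ( f_1(α) − (σ + 2G)·α ) and α_2 ∈ argmin_{α ∈ S} ( f_2(α) − σ·α ), then α_1 ≥ α_2. -/
/-- Monotonicity of perturbed leaders on the real line: increasing the linear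
perturbation coefficient by `2G` moves any minimizer weakly to the right, provided
the two cumulative losses differ by a `G`-Lipschitz function on `S`. -/
theorem perturbed_minimizer_monotone (S : Set ℝ) (hS : S.Nonempty) (hSfin : S.Finite)
    (G : ℝ) (hG : 0 < G) (σ : ℝ) (f₁ f₂ : ℝ → ℝ)
    (hlip : ∀ x ∈ S, ∀ y ∈ S, |(f₁ x - f₂ x) - (f₁ y - f₂ y)| ≤ G * |x - y|)
    (α₁ α₂ : ℝ) (hα₁ : α₁ ∈ S) (hα₂ : α₂ ∈ S)
    (hmin₁ : ∀ β ∈ S, f₁ α₁ - (σ + 2 * G) * α₁ ≤ f₁ β - (σ + 2 * G) * β)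
    (hmin₂ : ∀ β ∈ S, f₂ α₂ - σ * α₂ ≤ f₂ β - σ * β) :
    α₂ ≤ α₁ := by
  by_contra h
  push_neg at h
  have h1 := hmin₁ α₂ hα₂
  have h2 := hmin₂ α₁ hα₁
  have hlip' := hlip α₂ hα₂ α₁ hα₁
  have habs : |α₂ - α₁| = α₂ - α₁ := abs_of_pos (by linarith)
  rw [habs] at hlip'
  have := abs_le.mp hlip' |>.2
  nlinarith
end

section
/- Let T ≥ 1, G > 0, η > 0, and let A' ⊆ [0, 1] be a nonempty finite set. Let l_1, …, l_T : ℝ → ℝ each be G-Lipschitz. Let σ be a random variable with the exponential distribution of rate η on [0, ∞), and for each t = 1, …, T+1 let α_t : [0, ∞) → A' be a measurable selection with α_t(s) ∈ argmin_{α ∈ A'} ( Σ_{i=1}^{t−1} l_i(α) − s·α ) for every s ≥ 0. Then E[σ] + G·Σ_{t=1}^{T} E[ |α_t(σ) − α_{t+1}(σ)| ] ≤ 1/η + 2ηG²T. In particular, choosing η = T^{−1/2} makes this bound equal to (1 + 2G²)·√T. -/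
open MeasureTheory ProbabilityTheory Finset

namespace FTPLProof

open Real Set Filter

noncomputable def pdf' (η x : ℝ) : ℝ := if 0 ≤ x then η * Real.exp (-(η * x)) else 0

lemma pdf'_eq (η : ℝ) : exponentialPDFReal η = pdf' η := by
  funext x
  rw [exponentialPDFReal, gammaPDFReal, pdf']
  split_ifs with h
  · rw [Real.rpow_one, Real.Gamma_one, sub_self, Real.rpow_zero]
    ring
  · rfl

lemma pdf'_nonneg (η : ℝ) (hη : 0 < η) (x : ℝ) : 0 ≤ pdf' η x := by
  rw [pdf']; split_ifs <;> positivity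

lemma measurable_pdf' (η : ℝ) : Measurable (pdf' η) := by
  rw [← pdf'_eq]; exact measurable_exponentialPDFReal η

lemma integrable_pdf' {η : ℝ} (hη : 0 < η) : Integrable (pdf' η) := by
  have heq : pdf' η = Set.indicator (Ici (0:ℝ)) (fun x => η * Real.exp (-(η * x))) := by
    funext x
    rw [pdf', Set.indicator]
    by_cases h : 0 ≤ x
    · rw [if_pos h, if_pos (by exact h)]
    · rw [if_neg h, if_neg (by exact h)]
  rw [heq, integrable_indicator_iff measurableSet_Ici]
  rw [IntegrableOn, ← Measure.restrict_congr_set Ioi_ae_eq_Ici]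
  simpa [neg_mul] using (exp_neg_integrableOn_Ioi 0 hη).const_mul η

lemma setIntegral_pdf'_Ici {η : ℝ} (hη : 0 < η) {c : ℝ} (hc : 0 ≤ c) :
    ∫ x in Ici c, pdf' η x = Real.exp (-(η * c)) := by
  rw [integral_Ici_eq_integral_Ioi]
  rw [setIntegral_congr_fun measurableSet_Ioi
      (g := fun x => η * Real.exp (-(η * x)))
      (fun x hx => by rw [pdf', if_pos (le_trans hc (le_of_lt hx))])]
  have hderiv : ∀ x ∈ Ici c,
      HasDerivAt (fun a => -Real.exp (-(η * a))) (η * Real.exp (-(η * x))) x :=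
    fun x _ => hasDerivAt_neg_exp_mul_exp
  have hint : IntegrableOn (fun x => η * Real.exp (-(η * x))) (Ioi c) := by
    have h := (exp_neg_integrableOn_Ioi c hη).const_mul η
    simp only [neg_mul] at h ⊢
    exact h
  have htend : Tendsto (fun a => -Real.exp (-(η * a))) atTop (nhds 0) := by
    rw [show (0:ℝ) = -0 by ring]
    apply Filter.Tendsto.neg
    have h1 : Tendsto (fun a : ℝ => η * a) atTop atTop :=
      Filter.Tendsto.const_mul_atTop hη tendsto_id
    have h2 : Tendsto (fun a : ℝ => -(η * a)) atTop atBot := tendsto_neg_atTop_atBot.comp h1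
    exact Real.tendsto_exp_atBot.comp h2
  rw [integral_Ioi_of_hasDerivAt_of_tendsto' hderiv hint htend]
  ring

lemma integral_expMeasure_eq {η : ℝ} (hη : 0 < η) (g : ℝ → ℝ) :
    ∫ x, g x ∂(expMeasure η) = ∫ x, pdf' η x * g x := by
  have hm : Measurable (fun x => (pdf' η x).toNNReal) := (measurable_pdf' η).real_toNNReal
  have hmeq : expMeasure η = volume.withDensity (fun x => ((pdf' η x).toNNReal : ENNReal)) := by
    rw [expMeasure, gammaMeasure]
    congr 1
    funext x
    rw [gammaPDF]
    have h1 : gammaPDFReal 1 η x = pdf' η x := by rw [show gammaPDFReal 1 η x = exponentialPDFReal η x from rfl, pdf'_eq]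
    rw [h1]
    rfl
  rw [hmeq, integral_withDensity_eq_integral_smul hm]
  congr 1; funext x
  rw [NNReal.smul_def, smul_eq_mul, Real.coe_toNNReal _ (pdf'_nonneg η hη x)]

lemma integrable_pdf'_mul {η : ℝ} (hη : 0 < η) {c : ℝ} (hc : 0 ≤ c) {g : ℝ → ℝ}
    (hg : Measurable g) (hg01 : ∀ s : ℝ, 0 ≤ s → 0 ≤ g s ∧ g s ≤ 1) :
    Integrable (fun x => pdf' η x * g (x + c)) := by
  apply (integrable_pdf' hη).mono'
  · exact ((measurable_pdf' η).mul (hg.comp (measurable_add_const c))).aestronglyMeasurable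
  · refine Filter.Eventually.of_forall (fun x => ?_)
    rw [Real.norm_eq_abs, abs_mul, abs_of_nonneg (pdf'_nonneg η hη x)]
    by_cases hx : 0 ≤ x
    · have h := hg01 (x + c) (by linarith)
      have habs : |g (x + c)| ≤ 1 := abs_le.mpr ⟨by linarith [h.1], h.2⟩
      calc pdf' η x * |g (x+c)| ≤ pdf' η x * 1 :=
            mul_le_mul_of_nonneg_left habs (pdf'_nonneg η hη x)
        _ = pdf' η x := mul_one _
    · rw [pdf', if_neg hx]; simp

lemma shift_bound {η : ℝ} (hη : 0 < η) {c : ℝ} (hc : 0 ≤ c) {g : ℝ → ℝ}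
    (hg : Measurable g) (hg01 : ∀ s : ℝ, 0 ≤ s → 0 ≤ g s ∧ g s ≤ 1) :
    ∫ x, pdf' η x * g (x + c) ≤ (1 - Real.exp (-(η * c))) + ∫ x, pdf' η x * g x := by
  have key : (∫ x, pdf' η x * g (x + c)) = ∫ x, pdf' η (x - c) * g x := by
    have h := integral_add_right_eq_self (μ := volume) (fun x => pdf' η (x - c) * g x) c
    simp only [add_sub_cancel_right] at h
    exact h
  rw [key]
  have hIci : (∫ x, pdf' η (x - c) * g x) = ∫ x in Ici c, pdf' η (x - c) * g x := by
    refine (setIntegral_eq_integral_of_forall_compl_eq_zero (fun x hx => ?_)).symm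
    have hx' : x < c := by simpa [Set.mem_Ici] using hx
    rw [pdf', if_neg (by linarith), zero_mul]
  rw [hIci]
  have hcong : (∫ x in Ici c, pdf' η (x - c) * g x)
      = ∫ x in Ici c, Real.exp (η * c) * (pdf' η x * g x) := by
    refine setIntegral_congr_fun measurableSet_Ici (fun x hx => ?_)
    have hx' : c ≤ x := hx
    rw [pdf', pdf', if_pos (by linarith : (0:ℝ) ≤ x - c), if_pos (by linarith : (0:ℝ) ≤ x)]
    have hexp : Real.exp (-(η * (x - c))) = Real.exp (η * c) * Real.exp (-(η * x)) := by
      rw [← Real.exp_add]; exact congrArg Real.exp (by ring)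
    rw [hexp]; ring
  rw [hcong, integral_const_mul]
  have hpg_int : Integrable (fun x => pdf' η x * g x) := by
    simpa using integrable_pdf'_mul hη le_rfl hg hg01
  set J := ∫ x in Ici c, pdf' η x * g x with hJdef
  have hJ_nonneg : 0 ≤ J :=
    setIntegral_nonneg measurableSet_Ici
      (fun x hx => mul_nonneg (pdf'_nonneg η hη x) ((hg01 x (le_trans hc hx)).1))
  have hJ_le : J ≤ Real.exp (-(η * c)) := by
    rw [← setIntegral_pdf'_Ici hη hc]
    refine setIntegral_mono_on hpg_int.integrableOn (integrable_pdf' hη).integrableOn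
      measurableSet_Ici (fun x hx => ?_)
    have h := hg01 x (le_trans hc hx)
    nlinarith [pdf'_nonneg η hη x]
  have hJ_le' : J ≤ ∫ x, pdf' η x * g x := by
    refine setIntegral_le_integral hpg_int (Filter.Eventually.of_forall (fun x => ?_))
    show (0:ℝ) ≤ pdf' η x * g x
    by_cases hx : 0 ≤ x
    · exact mul_nonneg (pdf'_nonneg η hη x) (hg01 x hx).1
    · rw [pdf', if_neg hx, zero_mul]
  have hexp1 : Real.exp (η * c) * Real.exp (-(η * c)) = 1 := by
    rw [← Real.exp_add]; simp
  have hexp2 : 1 ≤ Real.exp (η * c) := Real.one_le_exp (by positivity)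
  nlinarith [mul_le_mul_of_nonneg_left hJ_le (by linarith : (0:ℝ) ≤ Real.exp (η * c) - 1)]

lemma mean_eq {η : ℝ} (hη : 0 < η) : ∫ x, pdf' η x * x = 1 / η := by
  have h0 : ∀ x : ℝ, x ∉ Ioi (0:ℝ) → pdf' η x * x = 0 := by
    intro x hx
    simp only [Set.mem_Ioi, not_lt] at hx
    rcases lt_or_eq_of_le hx with h | h
    · rw [pdf', if_neg (not_le.mpr h), zero_mul]
    · rw [h, mul_zero]
  rw [← setIntegral_eq_integral_of_forall_compl_eq_zero h0]
  have hcong : ∀ x ∈ Ioi (0:ℝ),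
      pdf' η x * x = η * (x ^ ((2:ℝ) - 1) * Real.exp (-(η * x))) := by
    intro x hx
    rw [pdf', if_pos (le_of_lt hx), show ((2:ℝ) - 1) = 1 by norm_num, Real.rpow_one]
    ring
  rw [setIntegral_congr_fun measurableSet_Ioi hcong, integral_const_mul,
    integral_rpow_mul_exp_neg_mul_Ioi (by norm_num : (0:ℝ) < 2) hη, Real.Gamma_two,
    show (2:ℝ) = ((2:ℕ):ℝ) by norm_num, Real.rpow_natCast]
  field_simp

end FTPLProof

/-- Stability bound for single-sample Follow-The-Perturbed-Leader on a finite set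
`A' ⊆ [0,1]`: with a single exponential perturbation of rate `η`, the expected
perturbation plus `G` times the total expected movement of the iterates is at most
`1/η + 2ηG²T`; in particular, for `η = T^{-1/2}` this bound equals `(1 + 2G²)√T`. -/
theorem ftpl_stability (T : ℕ) (hT : 1 ≤ T) (G η : ℝ) (hG : 0 < G) (hη : 0 < η)
    (A' : Set ℝ) (hA' : A'.Nonempty) (hA'fin : A'.Finite) (hA'sub : A' ⊆ Set.Icc (0 : ℝ) 1)
    (l : ℕ → ℝ → ℝ)
    (hl : ∀ t, 1 ≤ t → t ≤ T → ∀ x y : ℝ, |l t x - l t y| ≤ G * |x - y|)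
    (α : ℕ → ℝ → ℝ)
    (hmeas : ∀ t, 1 ≤ t → t ≤ T + 1 → Measurable (α t))
    (hmem : ∀ t, 1 ≤ t → t ≤ T + 1 → ∀ s : ℝ, 0 ≤ s → α t s ∈ A')
    (hmin : ∀ t, 1 ≤ t → t ≤ T + 1 → ∀ s : ℝ, 0 ≤ s → ∀ β ∈ A',
      (∑ i ∈ Ico 1 t, l i (α t s)) - s * α t s ≤ (∑ i ∈ Ico 1 t, l i β) - s * β) :
    (∫ s, s ∂(expMeasure η)) +
        G * ∑ t ∈ Icc 1 T, ∫ s, |α t s - α (t + 1) s| ∂(expMeasure η) ≤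
      1 / η + 2 * η * G ^ 2 * T ∧
    (η = ((T : ℝ)) ^ (-(1 : ℝ) / 2) →
      1 / η + 2 * η * G ^ 2 * T = (1 + 2 * G ^ 2) * Real.sqrt T) := by
  have hmono : ∀ u, 1 ≤ u → u ≤ T + 1 → ∀ s s' : ℝ, 0 ≤ s → s ≤ s' → α u s ≤ α u s' := by
    intro u h1 h2 s s' hs hss'
    rcases eq_or_lt_of_le hss' with rfl | hlt
    · exact le_refl _
    have hs' : 0 ≤ s' := le_trans hs hss'
    have ha := hmin u h1 h2 s hs (α u s') (hmem u h1 h2 s' hs')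
    have hb := hmin u h1 h2 s' hs' (α u s) (hmem u h1 h2 s hs)
    nlinarith [ha, hb]
  have hcross1 : ∀ t, 1 ≤ t → t ≤ T → ∀ s : ℝ, 0 ≤ s → ∀ c : ℝ, G < c →
      α (t+1) s ≤ α t (s + c) := by
    intro t h1 h2 s hs c hc
    have hc0 : 0 < c := lt_trans hG hc
    have hsc : 0 ≤ s + c := by linarith
    have hsum : ∀ β : ℝ, ∑ i ∈ Ico 1 (t+1), l i β = (∑ i ∈ Ico 1 t, l i β) + l t β :=
      fun β => Finset.sum_Ico_succ_top h1 _
    have hmem1 := hmem t h1 (by omega) (s + c) hsc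
    have hmem2 := hmem (t+1) (by omega) (by omega) s hs
    have ha := hmin (t+1) (by omega) (by omega) s hs (α t (s+c)) hmem1
    have hb := hmin t h1 (by omega) (s+c) hsc (α (t+1) s) hmem2
    simp only [hsum] at ha
    by_contra hcon
    push_neg at hcon
    have hlip := hl t h1 h2 (α (t+1) s) (α t (s+c))
    rw [abs_of_pos (sub_pos.mpr hcon)] at hlip
    have hlow := (abs_le.mp hlip).1
    nlinarith [ha, hb, hlow, mul_pos (sub_pos.mpr hc) (sub_pos.mpr hcon)]
  have hcross2 : ∀ t, 1 ≤ t → t ≤ T → ∀ s : ℝ, 0 ≤ s → ∀ c : ℝ, G < c →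
      α t s ≤ α (t+1) (s + c) := by
    intro t h1 h2 s hs c hc
    have hc0 : 0 < c := lt_trans hG hc
    have hsc : 0 ≤ s + c := by linarith
    have hsum : ∀ β : ℝ, ∑ i ∈ Ico 1 (t+1), l i β = (∑ i ∈ Ico 1 t, l i β) + l t β :=
      fun β => Finset.sum_Ico_succ_top h1 _
    have hmem1 := hmem (t+1) (by omega) (by omega) (s + c) hsc
    have hmem2 := hmem t h1 (by omega) s hs
    have ha := hmin t h1 (by omega) s hs (α (t+1) (s+c)) hmem1
    have hb := hmin (t+1) (by omega) (by omega) (s+c) hsc (α t s) hmem2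
    simp only [hsum] at hb
    by_contra hcon
    push_neg at hcon
    have hlip := hl t h1 h2 (α t s) (α (t+1) (s+c))
    rw [abs_of_pos (sub_pos.mpr hcon)] at hlip
    have hlow := (abs_le.mp hlip).2
    nlinarith [ha, hb, hlow, mul_pos (sub_pos.mpr hc) (sub_pos.mpr hcon)]
  have hpt : ∀ t, 1 ≤ t → t ≤ T → ∀ c : ℝ, G < c → ∀ s : ℝ, 0 ≤ s →
      |α t s - α (t+1) s| ≤ (α t (s+c) - α t s) + (α (t+1) (s+c) - α (t+1) s) := by
    intro t h1 h2 c hc s hs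
    have hc0 : 0 < c := lt_trans hG hc
    have m1 := hmono t h1 (by omega) s (s+c) hs (by linarith)
    have m2 := hmono (t+1) (by omega) (by omega) s (s+c) hs (by linarith)
    rcases le_total (α t s) (α (t+1) s) with h | h
    · rw [abs_of_nonpos (by linarith)]
      have := hcross1 t h1 h2 s hs c hc
      linarith
    · rw [abs_of_nonneg (by linarith)]
      have := hcross2 t h1 h2 s hs c hc
      linarith
  have key : ∀ t ∈ Icc 1 T,
      (∫ s, |α t s - α (t + 1) s| ∂(expMeasure η)) ≤ 2 * η * G := by
    intro t ht
    rw [Finset.mem_Icc] at ht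
    obtain ⟨h1, h2⟩ := ht
    have hg1m := hmeas t h1 (by omega)
    have hg2m := hmeas (t+1) (by omega) (by omega)
    have hg1_01 : ∀ s : ℝ, 0 ≤ s → 0 ≤ α t s ∧ α t s ≤ 1 := by
      intro s hs
      have h := hA'sub (hmem t h1 (by omega) s hs)
      exact ⟨h.1, h.2⟩
    have hg2_01 : ∀ s : ℝ, 0 ≤ s → 0 ≤ α (t+1) s ∧ α (t+1) s ≤ 1 := by
      intro s hs
      have h := hA'sub (hmem (t+1) (by omega) (by omega) s hs)
      exact ⟨h.1, h.2⟩
    rw [FTPLProof.integral_expMeasure_eq hη]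
    by_contra hcon
    push_neg at hcon
    set I := ∫ x, FTPLProof.pdf' η x * |α t x - α (t + 1) x| with hIdef
    set ε : ℝ := I - 2 * η * G with hεdef
    have hε : 0 < ε := by simp only [hεdef]; linarith
    have hbound : I ≤ 2 * η * G + ε / 2 := by
      set c : ℝ := G + (ε / 2) / (2 * η) with hc_def
      have hpos : 0 < (ε / 2) / (2 * η) := by positivity
      have hcG : G < c := by simp only [hc_def]; linarith
      have hc0 : 0 ≤ c := le_of_lt (lt_trans hG hcG)
      have habs_01 : ∀ s : ℝ, 0 ≤ s →
          0 ≤ |α t s - α (t+1) s| ∧ |α t s - α (t+1) s| ≤ 1 := by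
        intro s hs
        refine ⟨abs_nonneg _, ?_⟩
        have ha := hg1_01 s hs; have hb := hg2_01 s hs
        rw [abs_le]
        constructor <;> linarith [ha.1, ha.2, hb.1, hb.2]
      have iL : Integrable (fun x => FTPLProof.pdf' η x * |α t x - α (t+1) x|) := by
        simpa using FTPLProof.integrable_pdf'_mul hη le_rfl ((hg1m.sub hg2m).abs) habs_01
      have iA1 : Integrable (fun x => FTPLProof.pdf' η x * α t (x + c)) :=
        FTPLProof.integrable_pdf'_mul hη hc0 hg1m hg1_01
      have iA2 : Integrable (fun x => FTPLProof.pdf' η x * α (t+1) (x + c)) :=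
        FTPLProof.integrable_pdf'_mul hη hc0 hg2m hg2_01
      have iB1 : Integrable (fun x => FTPLProof.pdf' η x * α t x) := by
        simpa using FTPLProof.integrable_pdf'_mul hη le_rfl hg1m hg1_01
      have iB2 : Integrable (fun x => FTPLProof.pdf' η x * α (t+1) x) := by
        simpa using FTPLProof.integrable_pdf'_mul hη le_rfl hg2m hg2_01
      have hAsum : Integrable (fun x => FTPLProof.pdf' η x * α t (x+c)
          + FTPLProof.pdf' η x * α (t+1) (x+c)) := iA1.add iA2
      have hBsum : Integrable (fun x => FTPLProof.pdf' η x * α t x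
          + FTPLProof.pdf' η x * α (t+1) x) := iB1.add iB2
      have hmono_int : I ≤ ∫ x, ((FTPLProof.pdf' η x * α t (x+c)
            + FTPLProof.pdf' η x * α (t+1) (x+c))
          - (FTPLProof.pdf' η x * α t x + FTPLProof.pdf' η x * α (t+1) x)) := by
        refine integral_mono iL (hAsum.sub hBsum) (fun x => ?_)
        by_cases hx : 0 ≤ x
        · have hb := hpt t h1 h2 c hcG x hx
          have hp := FTPLProof.pdf'_nonneg η hη x
          have hm := mul_le_mul_of_nonneg_left hb hp
          simp only []
          nlinarith [hm]
        · simp only [FTPLProof.pdf', if_neg hx]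
          simp
      rw [integral_sub hAsum hBsum, integral_add iA1 iA2,
        integral_add iB1 iB2] at hmono_int
      have s1 := FTPLProof.shift_bound hη hc0 hg1m hg1_01
      have s2 := FTPLProof.shift_bound hη hc0 hg2m hg2_01
      have hexp : 1 - Real.exp (-(η * c)) ≤ η * c := by
        have := Real.add_one_le_exp (-(η * c)); linarith
      have hc_val : 2 * (η * c) = 2 * η * G + ε / 2 := by
        simp only [hc_def]
        field_simp
      clear_value c ε I
      linarith
    simp only [hεdef] at hbound
    linarith
  have hmean : (∫ s, s ∂(expMeasure η)) = 1 / η := by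
    rw [FTPLProof.integral_expMeasure_eq hη]
    exact FTPLProof.mean_eq hη
  have hsum_le : ∑ t ∈ Icc 1 T, (∫ s, |α t s - α (t + 1) s| ∂(expMeasure η))
      ≤ (T : ℝ) * (2 * η * G) := by
    calc ∑ t ∈ Icc 1 T, (∫ s, |α t s - α (t + 1) s| ∂(expMeasure η))
        ≤ (Icc 1 T).card • (2 * η * G) := Finset.sum_le_card_nsmul _ _ _ key
      _ = (T : ℝ) * (2 * η * G) := by
          rw [Nat.card_Icc, nsmul_eq_mul]
          norm_num
  constructor
  · rw [hmean]
    have hG2 : G * (∑ t ∈ Icc 1 T, ∫ s, |α t s - α (t + 1) s| ∂(expMeasure η))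
        ≤ G * ((T : ℝ) * (2 * η * G)) := mul_le_mul_of_nonneg_left hsum_le hG.le
    nlinarith [hG2]
  · intro hηT
    have hT0 : (0:ℝ) < (T:ℝ) := by
      have : 0 < T := by omega
      exact_mod_cast this
    have h1 : η = ((T:ℝ) ^ ((1:ℝ)/2))⁻¹ := by
      rw [hηT, show (-(1:ℝ))/2 = -((1:ℝ)/2) by ring, Real.rpow_neg hT0.le]
    have hpos : 0 < (T:ℝ) ^ ((1:ℝ)/2) := Real.rpow_pos_of_pos hT0 _
    have h2 : 1/η = Real.sqrt (T:ℝ) := by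
      rw [h1, one_div, inv_inv, Real.sqrt_eq_rpow]
    have h3 : η * (T:ℝ) = Real.sqrt (T:ℝ) := by
      rw [h1, Real.sqrt_eq_rpow]
      rw [inv_mul_eq_div, div_eq_iff (ne_of_gt hpos), ← Real.rpow_add hT0]
      norm_num
    rw [h2, show 2*η*G^2*(T:ℝ) = 2*G^2*(η*(T:ℝ)) by ring, h3]
    ring
end

section
/- For every G > 0 there exists a constant C > 0 (depending only on G) with the following property. Let T ≥ 1, let A ⊆ [0, 1] be a nonempty compact set, let l_1, …, l_T : ℝ → ℝ each be G-Lipschitz, let A' ⊆ A be a nonempty finite set with sup_{α ∈ A} inf_{α' ∈ A'} |α − α'| ≤ T^{−1/2}, let σ be a random variable with the exponential distribution of rate η = T^{−1/2} on [0, ∞), and for each t = 1, …, T let α_t : [0, ∞) → A' be a measurable selection with α_t(s) ∈ argmin_{α ∈ A'} ( Σ_{i=1}^{t−1} l_i(α) − s·α ) for every s ≥ 0. Then E[ Σ_{t=1}^{T} l_t(α_t(σ)) ] − min_{α ∈ A} Σ_{t=1}^{T} l_t(α) ≤ C·√T. -/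
open MeasureTheory ProbabilityTheory Finset
open scoped ENNReal NNReal

noncomputable def epdf (r x : ℝ) : ℝ := if 0 ≤ x then r * Real.exp (-(r * x)) else 0

lemma epdf_eq (r : ℝ) : exponentialPDFReal r = epdf r := by
  funext x
  rw [exponentialPDFReal, gammaPDFReal, epdf]
  simp only [Real.rpow_one, Real.Gamma_one, div_one, sub_self, Real.rpow_zero, mul_one]

lemma epdf_nonneg {r : ℝ} (hr : 0 ≤ r) (x : ℝ) : 0 ≤ epdf r x := by
  unfold epdf; split
  · positivity
  · exact le_refl 0

lemma epdf_meas (r : ℝ) : Measurable (epdf r) := by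
  rw [← epdf_eq]; exact measurable_exponentialPDFReal r

lemma expMeasure_eq (r : ℝ) :
    expMeasure r = volume.withDensity (fun x => ENNReal.ofReal (epdf r x)) := by
  rw [expMeasure, gammaMeasure]
  congr 1
  funext x
  rw [gammaPDF, ← epdf_eq]
  rfl

lemma integral_expMeasure {r : ℝ} (hr : 0 < r) (f : ℝ → ℝ) :
    ∫ s, f s ∂(expMeasure r) = ∫ s, epdf r s * f s := by
  rw [expMeasure_eq]
  have h : (fun x => ENNReal.ofReal (epdf r x)) =
      (fun x => ((fun x => (epdf r x).toNNReal) x : ℝ≥0∞)) := by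
    funext x; rfl
  rw [h, integral_withDensity_eq_integral_smul]
  · congr 1; funext x
    rw [NNReal.smul_def, smul_eq_mul, Real.coe_toNNReal _ (epdf_nonneg hr.le x)]
  · exact (epdf_meas r).real_toNNReal

lemma epdf_integrable {r : ℝ} (hr : 0 < r) : Integrable (epdf r) := by
  constructor
  · exact (epdf_meas r).aestronglyMeasurable
  · rw [hasFiniteIntegral_iff_ofReal (Filter.Eventually.of_forall (epdf_nonneg hr.le))]
    have : ∫⁻ x, ENNReal.ofReal (epdf r x) = 1 := by
      have := lintegral_exponentialPDF_eq_one hr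
      simp only [exponentialPDF, epdf_eq] at this ⊢
      exact this
    rw [this]; exact ENNReal.one_lt_top

lemma epdf_mul_integrable {r : ℝ} (hr : 0 < r) {f : ℝ → ℝ} (hf : Measurable f)
    {M : ℝ} (hM : ∀ s, |f s| ≤ M) : Integrable (fun s => epdf r s * f s) := by
  apply Integrable.mono' ((epdf_integrable hr).const_mul M)
    (((epdf_meas r).mul hf).aestronglyMeasurable)
  refine Filter.Eventually.of_forall (fun s => ?_)
  rw [Real.norm_eq_abs, Pi.mul_apply, abs_mul, abs_of_nonneg (epdf_nonneg hr.le s)]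
  calc epdf r s * |f s| ≤ epdf r s * M :=
        mul_le_mul_of_nonneg_left (hM s) (epdf_nonneg hr.le s)
    _ = M * epdf r s := mul_comm _ _

-- shift up:  ∫ pdf(s) f(s+c) ds ≤ e^{rc} ∫ pdf f
lemma epdf_shift_up {r c : ℝ} (hr : 0 < r) (hc : 0 ≤ c) {f : ℝ → ℝ} (hf : Measurable f)
    {M : ℝ} (hf0 : ∀ s, 0 ≤ f s) (hM : ∀ s, |f s| ≤ M) :
    ∫ s, epdf r s * f (s + c) ≤ Real.exp (r * c) * ∫ s, epdf r s * f s := by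
  have key : ∫ s, epdf r s * f (s + c) = ∫ u, epdf r (u - c) * f u := by
    have := integral_add_right_eq_self (μ := volume) (fun u => epdf r (u - c) * f u) c
    simp only [add_sub_cancel_right] at this
    rw [← this]
  rw [key]
  have hbound : ∀ u, epdf r (u - c) * f u ≤ Real.exp (r * c) * (epdf r u * f u) := by
    intro u
    rcases le_or_gt 0 (u - c) with h | h
    · have hu : 0 ≤ u := le_trans hc (by linarith)
      have : epdf r (u - c) = Real.exp (r * c) * epdf r u := by
        unfold epdf
        rw [if_pos h, if_pos hu, ← mul_assoc, mul_comm (Real.exp (r*c)) r, mul_assoc,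
          ← Real.exp_add]
        ring_nf
      rw [this, mul_assoc]
    · have : epdf r (u - c) = 0 := by unfold epdf; rw [if_neg (not_le.mpr h)]
      rw [this, zero_mul]
      exact mul_nonneg (Real.exp_nonneg _) (mul_nonneg (epdf_nonneg hr.le u) (hf0 u))
  apply le_trans (integral_mono_of_nonneg ?_ ?_ (Filter.Eventually.of_forall hbound))
  · rw [integral_const_mul]
  · exact Filter.Eventually.of_forall fun u =>
      mul_nonneg (epdf_nonneg hr.le _) (hf0 u)
  · exact ((epdf_mul_integrable hr hf hM)).const_mul _

-- shift down: ∫ pdf(s) (1_{s≥c} f(s-c)) ds = e^{-rc} ∫ pdf f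
lemma epdf_shift_down {r c : ℝ} (hr : 0 < r) (hc : 0 ≤ c) (f : ℝ → ℝ) :
    ∫ s, epdf r s * (if c ≤ s then f (s - c) else 0)
      = Real.exp (-(r * c)) * ∫ s, epdf r s * f s := by
  have key : ∫ s, epdf r s * (if c ≤ s then f (s - c) else 0)
      = ∫ u, epdf r (u + c) * (if c ≤ u + c then f u else 0) := by
    have := integral_add_right_eq_self (μ := volume)
      (fun s => epdf r s * (if c ≤ s then f (s - c) else 0)) c
    rw [← this]
    congr 1; funext u
    simp only [add_sub_cancel_right]
  rw [key, ← integral_const_mul]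
  congr 1; funext u
  rcases le_or_gt 0 u with h | h
  · rw [if_pos (by linarith)]
    have h2 : (0:ℝ) ≤ u + c := by linarith
    unfold epdf
    rw [if_pos h2, if_pos h]
    rw [show -(r * (u + c)) = -(r * c) + -(r * u) by ring, Real.exp_add]
    ring
  · rw [if_neg (by linarith)]
    have : epdf r u = 0 := by unfold epdf; rw [if_neg (not_le.mpr h)]
    rw [this, mul_zero, zero_mul, mul_zero]

lemma epdf_mul_id_integrable {r : ℝ} (hr : 0 < r) : Integrable (fun s => epdf r s * s) := by
  have hr2 : 0 < r / 2 := by linarith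
  apply Integrable.mono' ((epdf_integrable hr2).const_mul (4 / r))
    ((epdf_meas r).mul measurable_id).aestronglyMeasurable
  refine Filter.Eventually.of_forall (fun s => ?_)
  rw [Real.norm_eq_abs]
  simp only [Pi.mul_apply, id_eq]
  rcases le_or_gt 0 s with h | h
  · rw [abs_of_nonneg (mul_nonneg (epdf_nonneg hr.le s) h)]
    unfold epdf
    rw [if_pos h, if_pos h]
    have key : (r / 2) * s * Real.exp (-(r / 2 * s)) ≤ 1 := by
      have h1 : (r / 2) * s ≤ Real.exp (r / 2 * s) := by
        have := Real.add_one_le_exp (r / 2 * s); linarith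
      calc (r / 2) * s * Real.exp (-(r / 2 * s))
          ≤ Real.exp (r / 2 * s) * Real.exp (-(r / 2 * s)) :=
            mul_le_mul_of_nonneg_right h1 (Real.exp_nonneg _)
        _ = 1 := by rw [← Real.exp_add]; ring_nf; exact Real.exp_zero
    have hexp : Real.exp (-(r * s)) = Real.exp (-(r/2 * s)) * Real.exp (-(r/2 * s)) := by
      rw [← Real.exp_add]; ring_nf
    rw [hexp]
    calc r * (Real.exp (-(r/2*s)) * Real.exp (-(r/2*s))) * s
        = 2 * ((r/2) * s * Real.exp (-(r/2*s))) * Real.exp (-(r/2*s)) := by ring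
      _ ≤ 2 * 1 * Real.exp (-(r/2*s)) := by
          apply mul_le_mul_of_nonneg_right _ (Real.exp_nonneg _)
          exact mul_le_mul_of_nonneg_left key (by norm_num)
      _ = 4 / r * (r / 2 * Real.exp (-(r/2*s))) := by field_simp; ring
  · have : epdf r s = 0 := by unfold epdf; rw [if_neg (not_le.mpr h)]
    rw [this, zero_mul, abs_zero]
    exact mul_nonneg (by positivity) (epdf_nonneg hr2.le s)

lemma epdf_mean {r : ℝ} (hr : 0 < r) : ∫ s, epdf r s * s = 1 / r := by
  rw [← MeasureTheory.setIntegral_eq_integral_of_forall_compl_eq_zero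
    (s := Set.Ioi (0:ℝ)) (fun x hx => ?_)]
  · have h2 : (0:ℝ) < 2 := two_pos
    have key := Real.integral_rpow_mul_exp_neg_mul_Ioi h2 hr
    have congr1 : ∫ s in Set.Ioi (0:ℝ), epdf r s * s
        = ∫ t in Set.Ioi (0:ℝ), (t ^ ((2:ℝ) - 1) * Real.exp (-(r * t))) * r := by
      apply MeasureTheory.setIntegral_congr_fun measurableSet_Ioi
      intro x hx
      have hx' : (0:ℝ) < x := hx
      simp only []
      unfold epdf
      rw [if_pos hx'.le]
      rw [show (2:ℝ) - 1 = 1 by norm_num, Real.rpow_one]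
      ring
    rw [congr1, MeasureTheory.integral_mul_const, key, Real.Gamma_two]
    rw [show ((1:ℝ)/r) ^ (2:ℝ) = (1/r)^(2:ℕ) by rw [← Real.rpow_natCast]; norm_num]
    field_simp
  · -- x ∉ Ioi 0 → epdf r x * x = 0
    rcases lt_or_eq_of_le (not_lt.mp (by simpa using hx) : x ≤ 0) with h | h
    · have : epdf r x = 0 := by unfold epdf; rw [if_neg (not_le.mpr h)]
      rw [this, zero_mul]
    · rw [h, mul_zero]

lemma telescope_Ico (f : ℕ → ℝ) (T : ℕ) (hT : 1 ≤ T) :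
    ∑ t ∈ Ico 1 T, (f (t+1) - f t) = f T - f 1 := by
  induction T with
  | zero => omega
  | succ n ih =>
    rcases Nat.lt_or_ge 1 (n+1) with h | h
    · have hn : 1 ≤ n := by omega
      rw [Finset.sum_Ico_succ_top hn, ih hn]; ring
    · have : n = 0 := by omega
      subst this
      simp

lemma argmin_mono {L : ℝ → ℝ} {A' : Set ℝ} {x y s s' : ℝ} (hx : x ∈ A') (hy : y ∈ A')
    (hxs : ∀ γ ∈ A', L x - s * x ≤ L γ - s * γ)
    (hys : ∀ γ ∈ A', L y - s' * y ≤ L γ - s' * γ)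
    (hss : s < s') : x ≤ y := by
  by_contra hxy
  push_neg at hxy
  have h1 := hxs y hy
  have h2 := hys x hx
  nlinarith [mul_pos (sub_pos.mpr hss) (sub_pos.mpr hxy)]

lemma argmin_cross_up {L l' : ℝ → ℝ} {G : ℝ} (hG : 0 < G) {A' : Set ℝ} {x y s s' : ℝ}
    (hx : x ∈ A') (hy : y ∈ A')
    (hLip : ∀ u v : ℝ, |l' u - l' v| ≤ G * |u - v|)
    (hxs : ∀ γ ∈ A', (L x + l' x) - s * x ≤ (L γ + l' γ) - s * γ)
    (hys : ∀ γ ∈ A', L y - s' * y ≤ L γ - s' * γ)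
    (h : s + G < s') : x ≤ y := by
  by_contra hxy
  push_neg at hxy
  have h1 := hxs y hy
  have h2 := hys x hx
  have h3 := (abs_le.mp (hLip x y)).1
  rw [abs_of_pos (sub_pos.mpr hxy)] at h3
  nlinarith [mul_pos (show (0:ℝ) < s' - s - G by linarith) (sub_pos.mpr hxy)]

lemma argmin_cross_down {L l' : ℝ → ℝ} {G : ℝ} (hG : 0 < G) {A' : Set ℝ} {x y s s' : ℝ}
    (hx : x ∈ A') (hy : y ∈ A')
    (hLip : ∀ u v : ℝ, |l' u - l' v| ≤ G * |u - v|)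
    (hxs : ∀ γ ∈ A', (L x + l' x) - s * x ≤ (L γ + l' γ) - s * γ)
    (hys : ∀ γ ∈ A', L y - s' * y ≤ L γ - s' * γ)
    (h : s' + G < s) : y ≤ x := by
  by_contra hxy
  push_neg at hxy
  have h1 := hxs y hy
  have h2 := hys x hx
  have h3 := (abs_le.mp (hLip x y)).1
  rw [abs_of_neg (sub_neg.mpr hxy)] at h3
  nlinarith [mul_pos (show (0:ℝ) < s - s' - G by linarith) (sub_pos.mpr hxy)]

lemma core_btl (T : ℕ) (hT : 1 ≤ T) {G : ℝ} (hG : 0 < G) (l : ℕ → ℝ → ℝ)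
    (hLip : ∀ t, 1 ≤ t → t ≤ T → ∀ x y : ℝ, |l t x - l t y| ≤ G * |x - y|)
    {A' : Set ℝ} (hA'01 : A' ⊆ Set.Icc (0:ℝ) 1) {β : ℝ} (hβ : β ∈ A')
    (a : ℕ → ℝ → ℝ)
    (hmem : ∀ t, 1 ≤ t → t ≤ T → ∀ s : ℝ, 0 ≤ s → a t s ∈ A')
    (hopt : ∀ t, 1 ≤ t → t ≤ T → ∀ s : ℝ, 0 ≤ s → ∀ γ ∈ A',
      (∑ i ∈ Ico 1 t, l i (a t s)) - s * a t s ≤ (∑ i ∈ Ico 1 t, l i γ) - s * γ)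
    (s : ℝ) (hs : 0 ≤ s) :
    ∑ t ∈ Icc 1 T, l t (a t s) ≤
      (∑ t ∈ Ico 1 T, (l t (a t s) - l t (a (t+1) s)))
        + (∑ t ∈ Icc 1 T, l t β) + G + s := by
  set Φ : ℕ → ℝ := fun t => (∑ i ∈ Ico 1 t, l i (a t s)) - s * a t s with hΦ
  have hstep : ∀ t ∈ Ico 1 T, l t (a (t+1) s) ≤ Φ (t+1) - Φ t := by
    intro t ht
    obtain ⟨h1, h2⟩ := mem_Ico.mp ht
    have hmem' := hmem (t+1) (by omega) (by omega) s hs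
    have hopt' := hopt t h1 (by omega) s hs (a (t+1) s) hmem'
    have hsum : ∑ i ∈ Ico 1 (t+1), l i (a (t+1) s)
        = (∑ i ∈ Ico 1 t, l i (a (t+1) s)) + l t (a (t+1) s) :=
      Finset.sum_Ico_succ_top h1 _
    simp only [hΦ]
    rw [hsum]
    linarith
  have htel : ∑ t ∈ Ico 1 T, (Φ (t+1) - Φ t) = Φ T - Φ 1 := telescope_Ico Φ T hT
  have hsum3 : ∑ t ∈ Ico 1 T, l t (a (t+1) s) ≤ Φ T - Φ 1 :=
    le_of_le_of_eq (Finset.sum_le_sum hstep) htel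
  have hsum1 : ∑ t ∈ Icc 1 T, l t (a t s)
      = (∑ t ∈ Ico 1 T, l t (a t s)) + l T (a T s) := by
    rw [← Finset.Ico_add_one_right_eq_Icc, Finset.sum_Ico_succ_top hT]
  have hsum2 : ∑ t ∈ Ico 1 T, l t (a t s)
      = (∑ t ∈ Ico 1 T, (l t (a t s) - l t (a (t+1) s)))
        + ∑ t ∈ Ico 1 T, l t (a (t+1) s) := by
    rw [← Finset.sum_add_distrib]
    apply Finset.sum_congr rfl
    intro t _; ring
  have haT := hA'01 (hmem T hT le_rfl s hs)
  have hβ01 := hA'01 hβ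
  obtain ⟨haT0, haT1⟩ := haT
  obtain ⟨hβ0, hβ1⟩ := hβ01
  have hΦ1 : Φ 1 = - (s * a 1 s) := by
    simp only [hΦ, Finset.Ico_self, Finset.sum_empty]; ring
  have ha1 := hA'01 (hmem 1 le_rfl hT s hs)
  have hΦ1le : - Φ 1 ≤ s := by
    rw [hΦ1, neg_neg]
    calc s * a 1 s ≤ s * 1 := mul_le_mul_of_nonneg_left ha1.2 hs
      _ = s := mul_one s
  have hoptT := hopt T hT le_rfl s hs β hβ
  have hlipT := hLip T hT le_rfl (a T s) β
  have habs : |a T s - β| ≤ 1 := by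
    rw [abs_le]; constructor <;> linarith
  have hlT : l T (a T s) ≤ l T β + G := by
    have h1 := (abs_le.mp hlipT).2
    have h2 : G * |a T s - β| ≤ G * 1 := mul_le_mul_of_nonneg_left habs hG.le
    linarith
  have hB : ∑ t ∈ Icc 1 T, l t β = (∑ t ∈ Ico 1 T, l t β) + l T β := by
    rw [← Finset.Ico_add_one_right_eq_Icc, Finset.sum_Ico_succ_top hT]
  have hsβ : 0 ≤ s * β := mul_nonneg hs hβ0
  have hΦT : Φ T ≤ (∑ t ∈ Ico 1 T, l t β) - s * β := hoptT
  rw [hsum1, hsum2, hB]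
  linarith

lemma epdf_lintegral_one {r : ℝ} (hr : 0 < r) : ∫⁻ x, ENNReal.ofReal (epdf r x) = 1 := by
  have := lintegral_exponentialPDF_eq_one hr
  simp only [exponentialPDF, epdf_eq] at this
  exact this

lemma epdf_integral_one {r : ℝ} (hr : 0 < r) : ∫ s, epdf r s = 1 := by
  rw [integral_eq_lintegral_of_nonneg_ae (Filter.Eventually.of_forall (epdf_nonneg hr.le))
    (epdf_meas r).aestronglyMeasurable, epdf_lintegral_one hr]
  simp

lemma lipschitz_continuous {G : ℝ} (hG : 0 < G) {lt : ℝ → ℝ}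
    (hLip : ∀ u v : ℝ, |lt u - lt v| ≤ G * |u - v|) : Continuous lt := by
  have : LipschitzWith (Real.toNNReal G) lt := by
    apply LipschitzWith.of_dist_le_mul
    intro x y
    rw [Real.dist_eq, Real.dist_eq, Real.coe_toNNReal G hG.le]
    exact hLip x y
  exact this.continuous

lemma epdf_mul_le_one {r : ℝ} (hr : 0 < r) {f : ℝ → ℝ} (hfmeas : Measurable f)
    (hf01 : ∀ s, f s ∈ Set.Icc (0:ℝ) 1) : ∫ s, epdf r s * f s ≤ 1 := by
  have h1 : ∫ s, epdf r s * f s ≤ ∫ s, epdf r s := by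
    apply integral_mono (epdf_mul_integrable hr hfmeas
      (M := 1) (fun s => abs_le.mpr ⟨by linarith [(hf01 s).1], (hf01 s).2⟩))
      (epdf_integrable hr)
    intro s
    calc epdf r s * f s ≤ epdf r s * 1 :=
          mul_le_mul_of_nonneg_left (hf01 s).2 (epdf_nonneg hr.le s)
      _ = epdf r s := mul_one _
  exact h1.trans_eq (epdf_integral_one hr)

lemma stab_integral {r G : ℝ} (hr : 0 < r) (hr1 : r ≤ 1) (hG : 0 < G)
    {f h : ℝ → ℝ} (hfmeas : Measurable f) (hhmeas : Measurable h)
    (hf01 : ∀ s, f s ∈ Set.Icc (0:ℝ) 1) (hh01 : ∀ s, h s ∈ Set.Icc (0:ℝ) 1)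
    {lt : ℝ → ℝ} (hLip : ∀ u v : ℝ, |lt u - lt v| ≤ G * |u - v|)
    (hmono : ∀ s s' : ℝ, 0 ≤ s → s < s' → f s ≤ f s')
    (hcu : ∀ s s' : ℝ, 0 ≤ s → 0 ≤ s' → s + G < s' → h s ≤ f s')
    (hcd : ∀ s s' : ℝ, 0 ≤ s → 0 ≤ s' → s' + G < s → f s' ≤ h s) :
    ∫ s, epdf r s * (lt (f s) - lt (h s)) ≤ G * (2*G*(Real.exp (2*G) + 2)) * r := by
  have hltc : Continuous lt := lipschitz_continuous hG hLip
  set c : ℝ := 2 * G with hc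
  have hc0 : 0 ≤ c := by positivity
  set w : ℝ → ℝ := fun s => if c ≤ s then f (s + c) - f (s - c) else 1 with hw
  -- pointwise stability
  have hstab : ∀ s : ℝ, 0 ≤ s → lt (f s) - lt (h s) ≤ G * w s := by
    intro s hs
    simp only [hw]
    by_cases hcs : c ≤ s
    · rw [if_pos hcs]
      have hsc0 : (0:ℝ) ≤ s - c := by linarith
      have h1 : f (s - c) ≤ f s := by
        rcases eq_or_lt_of_le (show s - c ≤ s by linarith) with heq | hlt'
        · rw [heq]
        · exact hmono (s-c) s hsc0 hlt'
      have h2 : f s ≤ f (s + c) := hmono s (s+c) hs (by linarith)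
      have h3 : h s ≤ f (s + c) := hcu s (s+c) hs (by linarith) (by simp only [hc]; linarith)
      have h4 : f (s - c) ≤ h s := hcd s (s-c) hs hsc0 (by simp only [hc]; linarith)
      have habs : |f s - h s| ≤ f (s + c) - f (s - c) := by
        rw [abs_le]; constructor <;> linarith
      have hl := (abs_le.mp (hLip (f s) (h s))).2
      have := mul_le_mul_of_nonneg_left habs hG.le
      linarith [le_abs_self (lt (f s) - lt (h s)),
        mul_le_mul_of_nonneg_left habs hG.le,
        (abs_le.mp (hLip (f s) (h s))).2, abs_le.mp (hLip (f s) (h s)) |>.1]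
    · rw [if_neg hcs]
      have habs : |f s - h s| ≤ 1 := by
        rw [abs_le]
        constructor <;> [linarith [(hf01 s).1, (hh01 s).2]; linarith [(hf01 s).2, (hh01 s).1]]
      have hl := (abs_le.mp (hLip (f s) (h s))).2
      have := mul_le_mul_of_nonneg_left habs hG.le
      linarith [le_abs_self (lt (f s) - lt (h s))]
  -- pieces of w
  set A₁ : ℝ → ℝ := fun s => if c ≤ s then f (s + c) else 0 with hA₁
  set B₁ : ℝ → ℝ := fun s => if c ≤ s then f (s - c) else 0 with hB₁
  set C₁ : ℝ → ℝ := fun s => if c ≤ s then 0 else 1 with hC₁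
  have hsetc : MeasurableSet {s : ℝ | c ≤ s} := measurableSet_Ici
  have hfplus : Measurable (fun s => f (s + c)) := hfmeas.comp (measurable_add_const c)
  have hfminus : Measurable (fun s => f (s - c)) := hfmeas.comp (measurable_sub_const c)
  have hwmeas : Measurable w := Measurable.ite hsetc (hfplus.sub hfminus) measurable_const
  have hA₁meas : Measurable A₁ := Measurable.ite hsetc hfplus measurable_const
  have hB₁meas : Measurable B₁ := Measurable.ite hsetc hfminus measurable_const
  have hC₁meas : Measurable C₁ := Measurable.ite hsetc measurable_const measurable_const
  have hA₁bd : ∀ s, |A₁ s| ≤ 1 := by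
    intro s; simp only [hA₁]; split
    · rw [abs_le]; exact ⟨by linarith [(hf01 (s+c)).1], (hf01 (s+c)).2⟩
    · rw [abs_zero]; norm_num
  have hB₁bd : ∀ s, |B₁ s| ≤ 1 := by
    intro s; simp only [hB₁]; split
    · rw [abs_le]; exact ⟨by linarith [(hf01 (s-c)).1], (hf01 (s-c)).2⟩
    · rw [abs_zero]; norm_num
  have hC₁bd : ∀ s, |C₁ s| ≤ 1 := by
    intro s; simp only [hC₁]; split
    · rw [abs_zero]; norm_num
    · rw [abs_one]
  have hwbd : ∀ s, |G * w s| ≤ G := by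
    intro s
    rw [abs_mul, abs_of_pos hG]
    have : |w s| ≤ 1 := by
      simp only [hw]; split
      · rw [abs_le]
        constructor
        · linarith [(hf01 (s + c)).1, (hf01 (s - c)).2]
        · linarith [(hf01 (s + c)).2, (hf01 (s - c)).1]
      · rw [abs_one]
    calc G * |w s| ≤ G * 1 := mul_le_mul_of_nonneg_left this hG.le
      _ = G := mul_one G
  have hIntd : Integrable (fun s => epdf r s * (lt (f s) - lt (h s))) := by
    apply epdf_mul_integrable hr ((hltc.measurable.comp hfmeas).sub (hltc.measurable.comp hhmeas))
      (M := G)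
    intro s
    have := hLip (f s) (h s)
    have habs : |f s - h s| ≤ 1 := by
      rw [abs_le]
      constructor <;> [linarith [(hf01 s).1, (hh01 s).2]; linarith [(hf01 s).2, (hh01 s).1]]
    calc |lt (f s) - lt (h s)| ≤ G * |f s - h s| := hLip (f s) (h s)
      _ ≤ G * 1 := mul_le_mul_of_nonneg_left habs hG.le
      _ = G := mul_one G
  have hIntGw : Integrable (fun s => epdf r s * (G * w s)) :=
    epdf_mul_integrable hr (measurable_const.mul hwmeas) (M := G) hwbd
  -- step 1 : integral_mono
  have hstep1 : ∫ s, epdf r s * (lt (f s) - lt (h s)) ≤ ∫ s, epdf r s * (G * w s) := by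
    apply integral_mono hIntd hIntGw
    intro s
    rcases le_or_gt 0 s with hs | hs
    · exact mul_le_mul_of_nonneg_left (hstab s hs) (epdf_nonneg hr.le s)
    · have : epdf r s = 0 := by unfold epdf; rw [if_neg (not_le.mpr hs)]
      simp [this]
  have hstep2 : ∫ s, epdf r s * (G * w s) = G * ∫ s, epdf r s * w s := by
    rw [← integral_const_mul]
    congr 1; funext s; ring
  -- decompose w
  have hIntA₁ : Integrable (fun s => epdf r s * A₁ s) := epdf_mul_integrable hr hA₁meas hA₁bd
  have hIntB₁ : Integrable (fun s => epdf r s * B₁ s) := epdf_mul_integrable hr hB₁meas hB₁bd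
  have hIntC₁ : Integrable (fun s => epdf r s * C₁ s) := epdf_mul_integrable hr hC₁meas hC₁bd
  have hdecomp : ∫ s, epdf r s * w s =
      ((∫ s, epdf r s * A₁ s) - ∫ s, epdf r s * B₁ s) + ∫ s, epdf r s * C₁ s := by
    have heq : (fun s => epdf r s * w s)
        = fun s => (epdf r s * A₁ s - epdf r s * B₁ s) + epdf r s * C₁ s := by
      funext s
      simp only [hw, hA₁, hB₁, hC₁]
      split <;> ring
    have h1 : Integrable (fun s => epdf r s * A₁ s - epdf r s * B₁ s) := hIntA₁.sub hIntB₁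
    rw [heq, integral_add h1 hIntC₁, integral_sub hIntA₁ hIntB₁]
  set I : ℝ := ∫ s, epdf r s * f s with hI
  have hI0 : 0 ≤ I := integral_nonneg (fun s => mul_nonneg (epdf_nonneg hr.le s) (hf01 s).1)
  have hI1 : I ≤ 1 := epdf_mul_le_one hr hfmeas hf01
  set x : ℝ := r * c with hx
  have hx0 : 0 ≤ x := mul_nonneg hr.le hc0
  have hxle : x ≤ 2 * G := by
    simp only [hx, hc]
    calc r * (2*G) ≤ 1 * (2*G) := mul_le_mul_of_nonneg_right hr1 (by positivity)
      _ = 2*G := one_mul _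
  -- bound ∫ p A₁
  have hA₁le : ∫ s, epdf r s * A₁ s ≤ Real.exp x * I := by
    have h1 : ∫ s, epdf r s * A₁ s ≤ ∫ s, epdf r s * f (s + c) := by
      apply integral_mono hIntA₁
        (epdf_mul_integrable hr hfplus (M := 1)
          (fun s => abs_le.mpr ⟨by linarith [(hf01 (s+c)).1], (hf01 (s+c)).2⟩))
      intro s
      simp only [hA₁]
      split
      · exact le_refl _
      · rw [mul_zero]
        exact mul_nonneg (epdf_nonneg hr.le s) (hf01 (s+c)).1
    have h2 := epdf_shift_up hr hc0 hfmeas (fun s => (hf01 s).1)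
      (M := 1) (fun s => abs_le.mpr ⟨by linarith [(hf01 s).1], (hf01 s).2⟩)
    exact h1.trans h2
  have hB₁eq : ∫ s, epdf r s * B₁ s = Real.exp (-x) * I := by
    have := epdf_shift_down hr hc0 f
    simp only [hB₁, hx]
    exact this
  have hC₁eq : ∫ s, epdf r s * C₁ s = 1 - Real.exp (-x) := by
    have hind : ∫ s, epdf r s * (if c ≤ s then (1:ℝ) else 0) = Real.exp (-x) := by
      have := epdf_shift_down hr hc0 (fun _ => (1:ℝ))
      simp only [mul_one] at this
      rw [hx]
      rw [this, epdf_integral_one hr, mul_one]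
    have heq : (fun s => epdf r s * C₁ s)
        = fun s => epdf r s - epdf r s * (if c ≤ s then (1:ℝ) else 0) := by
      funext s; simp only [hC₁]; split <;> ring
    rw [heq, integral_sub (epdf_integrable hr)
      (epdf_mul_integrable hr (Measurable.ite hsetc measurable_const measurable_const)
        (M := 1) (fun s => by split <;> simp)), hind, epdf_integral_one hr]
  -- numeric bound
  have hcoef : 0 ≤ Real.exp x - Real.exp (-x) :=
    sub_nonneg.mpr (Real.exp_le_exp.mpr (by linarith))
  have hmul : Real.exp x * I - Real.exp (-x) * I ≤ Real.exp x - Real.exp (-x) := by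
    nlinarith [mul_nonneg hcoef (sub_nonneg.mpr hI1)]
  have h₁ : 1 - Real.exp (-x) ≤ x := by
    have := Real.add_one_le_exp (-x); linarith
  have h₂ : Real.exp x - 1 ≤ x * Real.exp x := by
    have h3 := mul_le_mul_of_nonneg_right h₁ (Real.exp_nonneg x)
    rw [sub_mul, one_mul, ← Real.exp_add, neg_add_cancel, Real.exp_zero] at h3
    linarith
  have hxexp : x * Real.exp x ≤ x * Real.exp (2*G) :=
    mul_le_mul_of_nonneg_left (Real.exp_le_exp.mpr hxle) hx0
  have hfinal : ∫ s, epdf r s * w s ≤ x * Real.exp (2*G) + 2 * x := by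
    rw [hdecomp, hB₁eq, hC₁eq]
    have := hA₁le
    linarith
  have hxval : x = r * (2*G) := by rw [hx, hc]
  calc ∫ s, epdf r s * (lt (f s) - lt (h s))
      ≤ G * ∫ s, epdf r s * w s := by rw [← hstep2]; exact hstep1
    _ ≤ G * (x * Real.exp (2*G) + 2 * x) := mul_le_mul_of_nonneg_left hfinal hG.le
    _ = G * (2*G*(Real.exp (2*G) + 2)) * r := by rw [hxval]; ring

/-- Main regret theorem: Follow-The-Perturbed-Leader with a single exponential
perturbation of rate `η = T^{-1/2}`, run by grid search over a finite `T^{-1/2}`-net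
`A'` of the compact set `A ⊆ [0,1]`, achieves `O(√T)` expected regret against the best
fixed parameter in `A`, for any sequence of `G`-Lipschitz per-period losses. -/
theorem ftpl_expected_regret (G : ℝ) (hG : 0 < G) :
    ∃ C : ℝ, 0 < C ∧
      ∀ (T : ℕ), 1 ≤ T →
      ∀ (A : Set ℝ), A.Nonempty → IsCompact A → A ⊆ Set.Icc (0 : ℝ) 1 →
      ∀ (l : ℕ → ℝ → ℝ),
        (∀ t, 1 ≤ t → t ≤ T → ∀ x y : ℝ, |l t x - l t y| ≤ G * |x - y|) →
      ∀ (A' : Set ℝ), A'.Nonempty → A'.Finite → A' ⊆ A →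
        (∀ a ∈ A, ∃ a' ∈ A', |a - a'| ≤ ((T : ℝ)) ^ (-(1 : ℝ) / 2)) →
      ∀ (α : ℕ → ℝ → ℝ),
        (∀ t, 1 ≤ t → t ≤ T → Measurable (α t)) →
        (∀ t, 1 ≤ t → t ≤ T → ∀ s : ℝ, 0 ≤ s → α t s ∈ A') →
        (∀ t, 1 ≤ t → t ≤ T → ∀ s : ℝ, 0 ≤ s → ∀ β ∈ A',
          (∑ i ∈ Ico 1 t, l i (α t s)) - s * α t s ≤ (∑ i ∈ Ico 1 t, l i β) - s * β) →
        (∫ s, (∑ t ∈ Icc 1 T, l t (α t s)) ∂(expMeasure (((T : ℝ)) ^ (-(1 : ℝ) / 2)))) -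
            sInf ((fun a => ∑ t ∈ Icc 1 T, l t a) '' A) ≤ C * Real.sqrt T := by
  set K : ℝ := 2*G*(Real.exp (2*G) + 2) with hK
  have hKpos : 0 < K := by positivity
  refine ⟨G * K + 2*G + 1, by positivity, ?_⟩
  intro T hT A hAne hAcomp hAsub l hLip A' hA'ne hA'fin hA'sub hnet α hαmeas hαmem hαopt
  -- basic facts about η and √T
  set η : ℝ := (T : ℝ) ^ (-(1:ℝ)/2) with hη
  have hT1 : (1:ℝ) ≤ (T:ℝ) := by exact_mod_cast hT
  have hTpos : (0:ℝ) < (T:ℝ) := by linarith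
  have hsqrt1 : 1 ≤ Real.sqrt T := by
    have := Real.sqrt_le_sqrt hT1
    rwa [Real.sqrt_one] at this
  have hsqrtpos : 0 < Real.sqrt T := by linarith
  have hη_eq : η = (Real.sqrt T)⁻¹ := by
    rw [hη, show (-(1:ℝ)/2) = -(1/2 : ℝ) by ring, Real.rpow_neg hTpos.le,
      ← Real.sqrt_eq_rpow]
  have hηpos : 0 < η := by rw [hη_eq]; positivity
  have hηle1 : η ≤ 1 := by
    rw [hη_eq]
    rw [inv_le_one_iff₀]
    right; exact hsqrt1
  have hTη : (T:ℝ) * η = Real.sqrt T := by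
    rw [hη_eq, ← Real.mul_self_sqrt hTpos.le]
    field_simp
    rw [Real.sqrt_sq hsqrtpos.le]
  have h1η : 1/η = Real.sqrt T := by rw [hη_eq, one_div, inv_inv]
  -- the shifted-selection functions
  set a : ℕ → ℝ → ℝ := fun t s => α t (max s 0) with ha
  have hamem : ∀ t, 1 ≤ t → t ≤ T → ∀ s : ℝ, a t s ∈ A' := by
    intro t h1 h2 s
    exact hαmem t h1 h2 _ (le_max_right s 0)
  have ha01 : ∀ t, 1 ≤ t → t ≤ T → ∀ s : ℝ, a t s ∈ Set.Icc (0:ℝ) 1 := by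
    intro t h1 h2 s
    exact hAsub (hA'sub (hamem t h1 h2 s))
  have hameas : ∀ t, 1 ≤ t → t ≤ T → Measurable (a t) := by
    intro t h1 h2
    exact (hαmeas t h1 h2).comp (measurable_id.max measurable_const)
  have haopt : ∀ t, 1 ≤ t → t ≤ T → ∀ s : ℝ, 0 ≤ s → ∀ γ ∈ A',
      (∑ i ∈ Ico 1 t, l i (a t s)) - s * a t s ≤ (∑ i ∈ Ico 1 t, l i γ) - s * γ := by
    intro t h1 h2 s hs γ hγ
    have := hαopt t h1 h2 s hs γ hγ
    simp only [ha, max_eq_left hs]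
    exact this
  have hA'01 : A' ⊆ Set.Icc (0:ℝ) 1 := fun x hx => hAsub (hA'sub hx)
  -- monotonicity and cross lemmas for a
  have hamono : ∀ t, 1 ≤ t → t ≤ T → ∀ s s' : ℝ, 0 ≤ s → s < s' → a t s ≤ a t s' := by
    intro t h1 h2 s s' hs hss
    exact argmin_mono (L := fun x => ∑ i ∈ Ico 1 t, l i x)
      (hamem t h1 h2 s) (hamem t h1 h2 s')
      (haopt t h1 h2 s hs) (haopt t h1 h2 s' (by linarith)) hss
  have hoptsplit : ∀ t, 1 ≤ t → t + 1 ≤ T → ∀ s : ℝ, 0 ≤ s → ∀ γ ∈ A',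
      ((∑ i ∈ Ico 1 t, l i (a (t+1) s)) + l t (a (t+1) s)) - s * a (t+1) s
        ≤ ((∑ i ∈ Ico 1 t, l i γ) + l t γ) - s * γ := by
    intro t h1 h2 s hs γ hγ
    have := haopt (t+1) (by omega) h2 s hs γ hγ
    rw [Finset.sum_Ico_succ_top h1, Finset.sum_Ico_succ_top h1] at this
    exact this
  have hacu : ∀ t, 1 ≤ t → t + 1 ≤ T → ∀ s s' : ℝ, 0 ≤ s → 0 ≤ s' → s + G < s' →
      a (t+1) s ≤ a t s' := by
    intro t h1 h2 s s' hs hs' hG'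
    exact argmin_cross_up (L := fun x => ∑ i ∈ Ico 1 t, l i x) (l' := l t) hG
      (hamem (t+1) (by omega) h2 s) (hamem t h1 (by omega) s')
      (hLip t h1 (by omega))
      (hoptsplit t h1 h2 s hs)
      (haopt t h1 (by omega) s' hs') hG'
  have hacd : ∀ t, 1 ≤ t → t + 1 ≤ T → ∀ s s' : ℝ, 0 ≤ s → 0 ≤ s' → s' + G < s →
      a t s' ≤ a (t+1) s := by
    intro t h1 h2 s s' hs hs' hG'
    exact argmin_cross_down (L := fun x => ∑ i ∈ Ico 1 t, l i x) (l' := l t) hG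
      (hamem (t+1) (by omega) h2 s) (hamem t h1 (by omega) s')
      (hLip t h1 (by omega))
      (hoptsplit t h1 h2 s hs)
      (haopt t h1 (by omega) s' hs') hG'
  -- measurability and bounds of loss compositions
  have hlmeas : ∀ t, 1 ≤ t → t ≤ T → Measurable (fun s => l t (a t s)) := by
    intro t h1 h2
    exact ((lipschitz_continuous hG (hLip t h1 h2)).measurable).comp (hameas t h1 h2)
  have hlbd : ∀ t, 1 ≤ t → t ≤ T → ∀ s : ℝ, |l t (a t s)| ≤ |l t 0| + G := by
    intro t h1 h2 s
    have hx := ha01 t h1 h2 s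
    have h := hLip t h1 h2 (a t s) 0
    have habs : |a t s - 0| ≤ 1 := by rw [sub_zero, abs_le]; exact ⟨by linarith [hx.1], hx.2⟩
    have h2' : G * |a t s - 0| ≤ G * 1 := mul_le_mul_of_nonneg_left habs hG.le
    calc |l t (a t s)| ≤ |l t (a t s) - l t 0| + |l t 0| := by
          have := abs_sub_abs_le_abs_sub (l t (a t s)) (l t 0); linarith [abs_nonneg (l t 0)]
      _ ≤ G * 1 + |l t 0| := by linarith
      _ = |l t 0| + G := by ring
  -- choose the comparator β via the minimizer over A and the net
  have hcont : Continuous (fun x => ∑ t ∈ Icc 1 T, l t x) := by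
    apply continuous_finset_sum
    intro t ht
    obtain ⟨h1, h2⟩ := mem_Icc.mp ht
    exact lipschitz_continuous hG (hLip t h1 h2)
  obtain ⟨a₀, ha₀A, hmin⟩ := hAcomp.exists_isMinOn hAne hcont.continuousOn
  have hsInf : sInf ((fun x => ∑ t ∈ Icc 1 T, l t x) '' A) = ∑ t ∈ Icc 1 T, l t a₀ := by
    apply IsLeast.csInf_eq
    constructor
    · exact Set.mem_image_of_mem _ ha₀A
    · rintro y ⟨x, hx, rfl⟩
      exact isMinOn_iff.mp hmin x hx
  obtain ⟨β, hβA', hβnet⟩ := hnet a₀ ha₀A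
  have hβ01 := hA'01 hβA'
  have ha₀01 := hAsub ha₀A
  have hBle : (∑ t ∈ Icc 1 T, l t β) ≤ (∑ t ∈ Icc 1 T, l t a₀) + G * Real.sqrt T := by
    have hstep : ∀ t ∈ Icc 1 T, l t β ≤ l t a₀ + G * η := by
      intro t ht
      obtain ⟨h1, h2⟩ := mem_Icc.mp ht
      have h := (abs_le.mp (hLip t h1 h2 β a₀)).2
      have habs : |β - a₀| ≤ η := by rw [abs_sub_comm]; exact hβnet
      have := mul_le_mul_of_nonneg_left habs hG.le
      linarith
    calc (∑ t ∈ Icc 1 T, l t β) ≤ ∑ t ∈ Icc 1 T, (l t a₀ + G * η) :=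
          Finset.sum_le_sum hstep
      _ = (∑ t ∈ Icc 1 T, l t a₀) + (Icc 1 T).card * (G * η) := by
          rw [Finset.sum_add_distrib, Finset.sum_const, nsmul_eq_mul]
      _ = (∑ t ∈ Icc 1 T, l t a₀) + G * Real.sqrt T := by
          rw [Nat.card_Icc]
          simp only [Nat.add_sub_cancel]
          rw [← hTη]; ring
  -- rewrite the goal integral in weighted form
  rw [integral_expMeasure hηpos, hsInf]
  have hcongr : (fun s => epdf η s * ∑ t ∈ Icc 1 T, l t (α t s))
      = fun s => epdf η s * ∑ t ∈ Icc 1 T, l t (a t s) := by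
    funext s
    rcases le_or_gt 0 s with hs | hs
    · congr 1
      apply Finset.sum_congr rfl
      intro t ht
      simp only [ha, max_eq_left hs]
    · have : epdf η s = 0 := by unfold epdf; rw [if_neg (not_le.mpr hs)]
      rw [this, zero_mul, zero_mul]
  rw [hcongr]
  set B : ℝ := ∑ t ∈ Icc 1 T, l t β with hBdef
  set D : ℝ → ℝ := fun s => ∑ t ∈ Ico 1 T, (l t (a t s) - l t (a (t+1) s)) with hD
  -- integrability facts
  have hIntF : Integrable (fun s => epdf η s * ∑ t ∈ Icc 1 T, l t (a t s)) := by
    apply epdf_mul_integrable hηpos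
      (Finset.measurable_sum _ (fun t ht => hlmeas t (mem_Icc.mp ht).1 (mem_Icc.mp ht).2))
      (M := ∑ t ∈ Icc 1 T, (|l t 0| + G))
    intro s
    calc |∑ t ∈ Icc 1 T, l t (a t s)| ≤ ∑ t ∈ Icc 1 T, |l t (a t s)| :=
          Finset.abs_sum_le_sum_abs _ _
      _ ≤ ∑ t ∈ Icc 1 T, (|l t 0| + G) :=
          Finset.sum_le_sum (fun t ht => hlbd t (mem_Icc.mp ht).1 (mem_Icc.mp ht).2 s)
  have hdmeas : ∀ t ∈ Ico 1 T, Measurable (fun s => l t (a t s) - l t (a (t+1) s)) := by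
    intro t ht
    obtain ⟨h1, h2⟩ := mem_Ico.mp ht
    exact (hlmeas t h1 (by omega)).sub
      (((lipschitz_continuous hG (hLip t h1 (by omega))).measurable).comp
        (hameas (t+1) (by omega) (by omega)))
  have hdbd : ∀ t ∈ Ico 1 T, ∀ s : ℝ, |l t (a t s) - l t (a (t+1) s)| ≤ G := by
    intro t ht s
    obtain ⟨h1, h2⟩ := mem_Ico.mp ht
    have hx := ha01 t h1 (by omega) s
    have hy := ha01 (t+1) (by omega) (by omega) s
    have habs : |a t s - a (t+1) s| ≤ 1 := by
      rw [abs_le]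
      constructor <;> [linarith [hx.1, hy.2]; linarith [hx.2, hy.1]]
    calc |l t (a t s) - l t (a (t+1) s)| ≤ G * |a t s - a (t+1) s| :=
          hLip t h1 (by omega) _ _
      _ ≤ G * 1 := mul_le_mul_of_nonneg_left habs hG.le
      _ = G := mul_one G
  have hIntd : ∀ t ∈ Ico 1 T,
      Integrable (fun s => epdf η s * (l t (a t s) - l t (a (t+1) s))) := by
    intro t ht
    exact epdf_mul_integrable hηpos (hdmeas t ht) (M := G) (hdbd t ht)
  have hDbd : ∀ s : ℝ, |D s| ≤ ((Ico 1 T).card : ℝ) * G := by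
    intro s
    calc |D s| ≤ ∑ t ∈ Ico 1 T, |l t (a t s) - l t (a (t+1) s)| :=
          Finset.abs_sum_le_sum_abs _ _
      _ ≤ ∑ t ∈ Ico 1 T, G := Finset.sum_le_sum (fun t ht => hdbd t ht s)
      _ = ((Ico 1 T).card : ℝ) * G := by rw [Finset.sum_const, nsmul_eq_mul]
  have hDmeas : Measurable D := Finset.measurable_sum _ hdmeas
  have hIntDBG : Integrable (fun s => epdf η s * (D s + (B + G))) := by
    apply epdf_mul_integrable hηpos (hDmeas.add_const (B+G))
      (M := ((Ico 1 T).card : ℝ) * G + |B + G|)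
    intro s
    calc |D s + (B+G)| ≤ |D s| + |B+G| := abs_add_le _ _
      _ ≤ ((Ico 1 T).card : ℝ) * G + |B + G| := by linarith [hDbd s]
  have heqRHS : (fun s => epdf η s * (D s + B + G + s))
      = fun s => epdf η s * (D s + (B+G)) + epdf η s * s := by
    funext s; ring
  have hIntRHS : Integrable (fun s => epdf η s * (D s + B + G + s)) := by
    rw [heqRHS]; exact hIntDBG.add (epdf_mul_id_integrable hηpos)
  -- pointwise core inequality (BTL)
  have hmono_int : ∫ s, epdf η s * ∑ t ∈ Icc 1 T, l t (a t s)
      ≤ ∫ s, epdf η s * (D s + B + G + s) := by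
    apply integral_mono hIntF hIntRHS
    intro s
    rcases le_or_gt 0 s with hs | hs
    · apply mul_le_mul_of_nonneg_left _ (epdf_nonneg hηpos.le s)
      exact core_btl T hT hG l hLip hA'01 hβA' a
        (fun t h1 h2 s' _ => hamem t h1 h2 s') haopt s hs
    · have : epdf η s = 0 := by unfold epdf; rw [if_neg (not_le.mpr hs)]
      simp [this]
  -- evaluate the RHS integral
  have hsplit : ∫ s, epdf η s * (D s + B + G + s)
      = (∫ s, epdf η s * (D s + (B+G))) + Real.sqrt T := by
    rw [heqRHS, integral_add hIntDBG (epdf_mul_id_integrable hηpos), epdf_mean hηpos, h1η]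
  have hDBG : ∫ s, epdf η s * (D s + (B+G))
      = (∑ t ∈ Ico 1 T, ∫ s, epdf η s * (l t (a t s) - l t (a (t+1) s))) + (B + G) := by
    have heq : (fun s => epdf η s * (D s + (B+G)))
        = fun s => (∑ t ∈ Ico 1 T, epdf η s * (l t (a t s) - l t (a (t+1) s)))
            + (B+G) * epdf η s := by
      funext s
      rw [← Finset.mul_sum]
      simp only [hD]
      ring
    have hint1 : Integrable
        (fun s => ∑ t ∈ Ico 1 T, epdf η s * (l t (a t s) - l t (a (t+1) s))) :=
      integrable_finset_sum _ hIntd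
    rw [heq, integral_add hint1 ((epdf_integrable hηpos).const_mul (B+G)),
      integral_finset_sum _ hIntd, integral_const_mul, epdf_integral_one hηpos, mul_one]
  -- stability bound
  have hstabt : ∀ t ∈ Ico 1 T,
      ∫ s, epdf η s * (l t (a t s) - l t (a (t+1) s)) ≤ G * K * η := by
    intro t ht
    obtain ⟨h1, h2⟩ := mem_Ico.mp ht
    calc ∫ s, epdf η s * (l t (a t s) - l t (a (t+1) s))
        ≤ G * (2*G*(Real.exp (2*G) + 2)) * η :=
          stab_integral hηpos hηle1 hG (hameas t h1 (by omega))
            (hameas (t+1) (by omega) (by omega))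
            (ha01 t h1 (by omega)) (ha01 (t+1) (by omega) (by omega))
            (hLip t h1 (by omega))
            (hamono t h1 (by omega))
            (hacu t h1 (by omega))
            (hacd t h1 (by omega))
      _ = G * K * η := by rw [hK]
  have hsum_stab : ∑ t ∈ Ico 1 T, ∫ s, epdf η s * (l t (a t s) - l t (a (t+1) s))
      ≤ G * K * Real.sqrt T := by
    calc ∑ t ∈ Ico 1 T, ∫ s, epdf η s * (l t (a t s) - l t (a (t+1) s))
        ≤ (Ico 1 T).card • (G * K * η) := Finset.sum_le_card_nsmul _ _ _ hstabt
      _ = ((Ico 1 T).card : ℝ) * (G * K * η) := nsmul_eq_mul _ _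
      _ ≤ (T:ℝ) * (G * K * η) := by
          apply mul_le_mul_of_nonneg_right _ (by positivity)
          rw [Nat.card_Ico]
          exact_mod_cast Nat.sub_le T 1
      _ = G * K * Real.sqrt T := by rw [← hTη]; ring
  have hGsqrt : G ≤ G * Real.sqrt T := by
    nlinarith
  linarith [hmono_int, hsplit, hDBG, hsum_stab, hBle, hGsqrt]
end

section
/- Let (Ω, 𝓕, P) be a probability space, let X be an essentially bounded real-valued random variable, and let τ ∈ ℝ. Define CVaR_α(Z) := inf_{y ∈ ℝ} ( y + α⁻¹·E[(Z − y)⁺] ) for α ∈ (0, 1], where (z)⁺ := max(z, 0). Assume E[X] < τ and P(X > τ) > 0. Then the set { α ∈ (0, 1] : CVaR_α(X − τ) ≤ 0 } is nonempty, its infimum α* is attained, the infimum of { E[(b·(X − τ) + 1)⁺] : b ∈ [0, ∞) } is attained, and α* = min_{b ≥ 0} E[(b·(X − τ) + 1)⁺]. -/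
open MeasureTheory
open scoped ENNReal NNReal

private lemma cvar_aux_integrable {Ω : Type*} [MeasurableSpace Ω] (P : Measure Ω)
    [IsProbabilityMeasure P] {g : Ω → ℝ} (hg : AEStronglyMeasurable g P) {C : ℝ}
    (hC : ∀ᵐ ω ∂P, |g ω| ≤ C) : Integrable g P :=
  ⟨hg, HasFiniteIntegral.of_bounded (C := C) (by simpa [Real.norm_eq_abs] using hC)⟩

private lemma cvar_aux_bound {Ω : Type*} [MeasurableSpace Ω] (P : Measure Ω)
    [IsProbabilityMeasure P] (X : Ω → ℝ) (hX : MemLp X ⊤ P) :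
    ∃ M : ℝ, 0 < M ∧ ∀ᵐ ω ∂P, |X ω| ≤ M := by
  refine ⟨(eLpNormEssSup X P).toReal + 1, by positivity, ?_⟩
  have h2 := hX.2
  rw [eLpNorm_exponent_top] at h2
  filter_upwards [ae_le_eLpNormEssSup (f := X) (μ := P)] with ω hω
  have h3 : ((‖X ω‖₊ : ℝ≥0∞)).toReal ≤ (eLpNormEssSup X P).toReal :=
    ENNReal.toReal_mono h2.ne hω
  simp only [ENNReal.coe_toReal, coe_nnnorm, Real.norm_eq_abs] at h3
  linarith

set_option maxHeartbeats 1000000 in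
/-- CVaR satisficing duality (Theorem 5 of the paper): if `E[X] < τ` and `P(X > τ) > 0`,
the smallest level `α* ∈ (0,1]` with `CVaR_α(X − τ) ≤ 0` exists and equals the attained
minimum of `E[(b(X − τ) + 1)⁺]` over `b ≥ 0`, where
`CVaR_α(Z) = inf_y ( y + α⁻¹ E[(Z − y)⁺] )`. -/
theorem cvar_satisficing_duality {Ω : Type*} [MeasurableSpace Ω] (P : Measure Ω)
    [IsProbabilityMeasure P] (X : Ω → ℝ) (hX : MemLp X ⊤ P) (τ : ℝ)
    (cvar : ℝ → (Ω → ℝ) → ℝ)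
    (hcvar : ∀ (a : ℝ) (Z : Ω → ℝ),
      cvar a Z = ⨅ y : ℝ, (y + a⁻¹ * ∫ ω, max (Z ω - y) 0 ∂P))
    (hmean : (∫ ω, X ω ∂P) < τ) (hpos : 0 < P {ω | τ < X ω}) :
    ∃ αstar : ℝ,
      IsLeast {a : ℝ | a ∈ Set.Ioc (0 : ℝ) 1 ∧ cvar a (fun ω => X ω - τ) ≤ 0} αstar ∧
      ∃ bstar : ℝ, 0 ≤ bstar ∧
        (∀ b : ℝ, 0 ≤ b →
          (∫ ω, max (bstar * (X ω - τ) + 1) 0 ∂P) ≤ ∫ ω, max (b * (X ω - τ) + 1) 0 ∂P) ∧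
        αstar = ∫ ω, max (bstar * (X ω - τ) + 1) 0 ∂P := by
  -- notation
  set Y : Ω → ℝ := fun ω => X ω - τ with hYdef
  set f : ℝ → ℝ := fun b => ∫ ω, max (b * Y ω + 1) 0 ∂P with hfdef
  set q : ℝ := ∫ ω, max (Y ω) 0 ∂P with hqdef
  clear_value Y f q
  have hYm : AEStronglyMeasurable Y P := by
    rw [hYdef]; exact hX.1.sub aestronglyMeasurable_const
  obtain ⟨M, hM0, hMb⟩ : ∃ M : ℝ, 0 < M ∧ ∀ᵐ ω ∂P, |Y ω| ≤ M := by
    obtain ⟨M, h1, h2⟩ := cvar_aux_bound P Y (by rw [hYdef]; exact hX.sub (memLp_const τ))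
    exact ⟨M, h1, h2⟩
  -- integrability facts
  have hFm : ∀ b : ℝ, AEStronglyMeasurable (fun ω => max (b * Y ω + 1) 0) P := fun b =>
    ((hYm.const_mul b).add aestronglyMeasurable_const).sup aestronglyMeasurable_const
  have hFint : ∀ b : ℝ, Integrable (fun ω => max (b * Y ω + 1) 0) P := by
    intro b
    refine cvar_aux_integrable P (hFm b) (C := |b| * M + 1) ?_
    filter_upwards [hMb] with ω hω
    have h1 : |b * Y ω + 1| ≤ |b| * M + 1 := by
      calc |b * Y ω + 1| ≤ |b * Y ω| + 1 := by
            simpa using abs_add_le (b * Y ω) 1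
        _ ≤ |b| * M + 1 := by
            rw [abs_mul]
            have := mul_le_mul_of_nonneg_left hω (abs_nonneg b)
            linarith
    rw [abs_of_nonneg (le_max_right _ _)]
    exact le_trans (max_le (le_abs_self _) (by positivity)) h1
  have hYint : Integrable Y P := cvar_aux_integrable P hYm hMb
  have hGm : ∀ y : ℝ, AEStronglyMeasurable (fun ω => max (Y ω - y) 0) P := fun y =>
    (hYm.sub aestronglyMeasurable_const).sup aestronglyMeasurable_const
  have hGint : ∀ y : ℝ, Integrable (fun ω => max (Y ω - y) 0) P := by
    intro y
    refine cvar_aux_integrable P (hGm y) (C := M + |y|) ?_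
    filter_upwards [hMb] with ω hω
    rw [abs_of_nonneg (le_max_right _ _)]
    refine max_le ?_ (by positivity)
    have h1 := abs_le.1 hω
    have h2 := neg_abs_le y
    linarith [h1.2]
  have hqint : Integrable (fun ω => max (Y ω) 0) P := by
    simpa using hGint 0
  -- E[Y] < 0
  have hEY : (∫ ω, Y ω ∂P) < 0 := by
    have h : (∫ ω, Y ω ∂P) = (∫ ω, X ω ∂P) - τ := by
      rw [hYdef]
      rw [integral_sub (hX.integrable le_top) (integrable_const τ)]
      simp
    rw [h]; linarith
  -- q > 0
  have hq0 : 0 < q := by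
    rcases lt_or_ge 0 q with h | h
    · exact h
    · exfalso
      have hnn : (0 : Ω → ℝ) ≤ᵐ[P] fun ω => max (Y ω) 0 :=
        Filter.Eventually.of_forall fun ω => le_max_right _ _
      have hq_eq : (∫ ω, max (Y ω) 0 ∂P) = 0 := by
        rw [← hqdef]
        exact le_antisymm h (hqdef ▸ integral_nonneg fun ω => le_max_right _ _)
      have hae := (integral_eq_zero_iff_of_nonneg_ae hnn hqint).1 hq_eq
      have hnull : P {ω | ¬ max (Y ω) 0 = 0} = 0 := by
        simpa [Filter.EventuallyEq, ae_iff] using hae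
      have hsub : {ω | τ < X ω} ⊆ {ω | ¬ max (Y ω) 0 = 0} := by
        intro ω hω
        simp only [Set.mem_setOf_eq] at hω ⊢
        have hY0 : 0 < Y ω := by rw [hYdef]; simp; linarith
        rw [max_eq_left hY0.le]
        exact hY0.ne'
      exact absurd (measure_mono_null hsub hnull) hpos.ne'
  -- f 0 = 1
  have hf0 : f 0 = 1 := by simp [hfdef]
  -- pointwise lower bound f b ≥ b * q for b ≥ 0
  have hflow : ∀ b : ℝ, 0 ≤ b → b * q ≤ f b := by
    intro b hb
    rw [hfdef, hqdef]
    have h : (∫ ω, b * max (Y ω) 0 ∂P) ≤ ∫ ω, max (b * Y ω + 1) 0 ∂P := by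
      refine integral_mono (hqint.const_mul b) (hFint b) fun ω => ?_
      rcases le_or_gt 0 (Y ω) with h | h
      · rw [max_eq_left h]
        exact le_trans (by nlinarith) (le_max_left (b * Y ω + 1) 0)
      · rw [max_eq_right h.le, mul_zero]
        exact le_max_right _ _
    rwa [integral_const_mul] at h
  -- f is Lipschitz with constant M
  have hfLip : ∀ a b : ℝ, |f a - f b| ≤ M * |a - b| := by
    intro a b
    rw [hfdef]
    have h1 : (∫ ω, max (a * Y ω + 1) 0 ∂P) - (∫ ω, max (b * Y ω + 1) 0 ∂P)
        = ∫ ω, (max (a * Y ω + 1) 0 - max (b * Y ω + 1) 0) ∂P := by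
      rw [integral_sub (hFint a) (hFint b)]
    rw [h1]
    calc |∫ ω, (max (a * Y ω + 1) 0 - max (b * Y ω + 1) 0) ∂P|
        ≤ ∫ ω, |max (a * Y ω + 1) 0 - max (b * Y ω + 1) 0| ∂P := by
          simpa [Real.norm_eq_abs] using
            norm_integral_le_integral_norm (μ := P)
              (f := fun ω => max (a * Y ω + 1) 0 - max (b * Y ω + 1) 0)
      _ ≤ ∫ (_ : Ω), M * |a - b| ∂P := by
          refine integral_mono_ae ((hFint a).sub (hFint b)).abs (integrable_const _) ?_
          filter_upwards [hMb] with ω hω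
          calc |max (a * Y ω + 1) 0 - max (b * Y ω + 1) 0|
              ≤ |(a * Y ω + 1) - (b * Y ω + 1)| := abs_max_sub_max_le_abs _ _ _
            _ = |a - b| * |Y ω| := by rw [← abs_mul]; ring_nf
            _ ≤ M * |a - b| := by
                rw [mul_comm]
                exact mul_le_mul_of_nonneg_right hω (abs_nonneg _) |>.trans
                  (by rw [mul_comm])
      _ = M * |a - b| := by simp
  have hfCont : Continuous f := by
    refine (LipschitzWith.of_dist_le_mul (K := ⟨M, hM0.le⟩) (f := f) ?_).continuous
    intro a b
    rw [Real.dist_eq, Real.dist_eq]; exact hfLip a b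
  -- f b0 < 1 for suitable small b0
  obtain ⟨b0, hb0pos, hb0M⟩ : ∃ b0 : ℝ, 0 < b0 ∧ b0 * M = 1 / 2 :=
    ⟨(2 * M)⁻¹, by positivity, by field_simp⟩
  have hfb0 : f b0 < 1 := by
    have hcongr : f b0 = ∫ ω, (b0 * Y ω + 1) ∂P := by
      rw [hfdef]
      refine integral_congr_ae ?_
      filter_upwards [hMb] with ω hω
      have h1 : |b0 * Y ω| ≤ b0 * M := by
        rw [abs_mul, abs_of_nonneg hb0pos.le]
        exact mul_le_mul_of_nonneg_left hω hb0pos.le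
      have h3 := (abs_le.1 h1).1
      rw [hb0M] at h3
      have h4 : 0 < b0 * Y ω + 1 := by linarith
      exact max_eq_left h4.le
    rw [hcongr, integral_add (hYint.const_mul b0) (integrable_const 1),
      integral_const_mul]
    simp only [integral_const, probReal_univ, smul_eq_mul, one_mul]
    nlinarith
  -- existence of a global minimizer of f on [0, ∞)
  set B : ℝ := (f b0 + 1) / q with hBdef
  have hfb0nn : 0 ≤ f b0 := by
    rw [hfdef]; exact integral_nonneg fun ω => le_max_right _ _
  have hBpos : 0 < B := by rw [hBdef]; positivity
  have hb0B : b0 ∈ Set.Icc (0:ℝ) B := by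
    refine ⟨hb0pos.le, ?_⟩
    have h1 : b0 * q ≤ f b0 := hflow b0 hb0pos.le
    rw [hBdef, le_div_iff₀ hq0]
    nlinarith
  clear_value B
  obtain ⟨bs, hbsmem, hbsmin⟩ :=
    isCompact_Icc.exists_isMinOn (Set.nonempty_of_mem hb0B) hfCont.continuousOn
  have hmin' : ∀ x ∈ Set.Icc (0:ℝ) B, f bs ≤ f x := fun x hx => hbsmin hx
  have hgmin : ∀ b : ℝ, 0 ≤ b → f bs ≤ f b := by
    intro b hb
    rcases le_or_gt b B with h | h
    · exact hmin' b ⟨hb, h⟩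
    · have h1 : f b0 + 1 ≤ b * q := by
        rw [hBdef, div_lt_iff₀ hq0] at h
        nlinarith
      have h2 := hflow b hb
      have h3 := hmin' b0 hb0B
      linarith
  have hbs0 : 0 ≤ bs := hbsmem.1
  have hfbs1 : f bs < 1 := lt_of_le_of_lt (hmin' b0 hb0B) hfb0
  have hbspos : 0 < bs := by
    rcases hbs0.lt_or_eq with h | h
    · exact h
    · exfalso; rw [← h, hf0] at hfbs1; exact lt_irrefl 1 hfbs1
  have hfbspos : 0 < f bs := lt_of_lt_of_le (by positivity) (hflow bs hbs0)
  have hfbsle1 : f bs ≤ 1 := le_trans (hgmin 0 le_rfl) (le_of_eq hf0)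
  -- substitution: ∫ max (Y ω - (-(b⁻¹))) 0 = b⁻¹ * f b  for b > 0
  have hsubst : ∀ b : ℝ, 0 < b →
      (∫ ω, max (Y ω - (-(b⁻¹))) 0 ∂P) = b⁻¹ * f b := by
    intro b hb
    rw [hfdef]
    have hpt : ∀ ω, max (Y ω - (-(b⁻¹))) 0 = b⁻¹ * max (b * Y ω + 1) 0 := by
      intro ω
      rw [mul_max_of_nonneg _ _ (inv_nonneg.2 hb.le), mul_zero]
      congr 1
      field_simp
      ring
    simp_rw [hpt]
    rw [integral_const_mul]
  -- lower bound for the inner objective (bddBelow)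
  have hglow : ∀ a : ℝ, 0 < a → a ≤ 1 → ∀ y : ℝ,
      min 0 (a⁻¹ * ∫ ω, Y ω ∂P) ≤ y + a⁻¹ * ∫ ω, max (Y ω - y) 0 ∂P := by
    intro a ha0 ha1 y
    have hE0 : 0 ≤ ∫ ω, max (Y ω - y) 0 ∂P := integral_nonneg fun ω => le_max_right _ _
    have hEY' : (∫ ω, Y ω ∂P) - y ≤ ∫ ω, max (Y ω - y) 0 ∂P := by
      have h1 : (∫ ω, (Y ω - y) ∂P) ≤ ∫ ω, max (Y ω - y) 0 ∂P :=
        integral_mono (hYint.sub (integrable_const y)) (hGint y)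
          fun ω => le_max_left _ _
      rwa [integral_sub hYint (integrable_const y), integral_const, probReal_univ,
        one_smul] at h1
    have hainv : 1 ≤ a⁻¹ := by
      rw [le_inv_comm₀ (by norm_num) ha0]; simpa using ha1
    rcases le_or_gt 0 y with hy | hy
    · have h : 0 ≤ y + a⁻¹ * ∫ ω, max (Y ω - y) 0 ∂P := by positivity
      exact le_trans (min_le_left _ _) h
    · have h2 : a⁻¹ * ((∫ ω, Y ω ∂P) - y) ≤ a⁻¹ * ∫ ω, max (Y ω - y) 0 ∂P :=
        mul_le_mul_of_nonneg_left hEY' (by positivity)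
      have h3 : a⁻¹ * ∫ ω, Y ω ∂P ≤ y + a⁻¹ * ((∫ ω, Y ω ∂P) - y) := by nlinarith
      exact le_trans (min_le_right _ _) (by linarith)
  -- now construct everything
  refine ⟨f bs, ⟨⟨⟨hfbspos, hfbsle1⟩, ?_⟩, ?_⟩,
    bs, hbs0, ?_, by simp only [hfdef, hYdef]⟩
  · -- feasibility: cvar (f bs) Y ≤ 0
    rw [hcvar]
    have hbdd : BddBelow (Set.range fun y : ℝ =>
        y + (f bs)⁻¹ * ∫ ω, max (Y ω - y) 0 ∂P) := by
      refine ⟨min 0 ((f bs)⁻¹ * ∫ ω, Y ω ∂P), ?_⟩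
      rintro _ ⟨y, rfl⟩
      exact hglow (f bs) hfbspos hfbsle1 y
    refine le_trans (ciInf_le hbdd (-(bs⁻¹))) ?_
    rw [hsubst bs hbspos]
    have h5 : (f bs)⁻¹ * (bs⁻¹ * f bs) = bs⁻¹ := by
      field_simp
    rw [h5]
    simp
  · -- minimality
    rintro a ⟨⟨ha0, ha1⟩, hcv⟩
    by_contra hcon
    push_neg at hcon
    have hδpos : 0 < f bs - a := sub_pos.2 hcon
    obtain ⟨c, hcpos, hc1, hc2, hc3⟩ :
        ∃ c : ℝ, 0 < c ∧ c ≤ q ∧ c ≤ (f bs - a) * q / (2 * a ^ 2) ∧ c ≤ q / (2 * a) := by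
      refine ⟨min q (min ((f bs - a) * q / (2 * a ^ 2)) (q / (2 * a))), ?_, ?_, ?_, ?_⟩
      · exact lt_min hq0 (lt_min (by positivity) (by positivity))
      · exact min_le_left _ _
      · exact le_trans (min_le_right _ _) (min_le_left _ _)
      · exact le_trans (min_le_right _ _) (min_le_right _ _)
    have hainv : 1 ≤ a⁻¹ := by
      rw [le_inv_comm₀ (by norm_num) ha0]; simpa using ha1
    have hlb : ∀ y : ℝ, c ≤ y + a⁻¹ * ∫ ω, max (Y ω - y) 0 ∂P := by
      intro y
      rcases le_or_gt 0 y with hy | hy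
      · -- y ≥ 0 case : value ≥ q
        have hE0 : 0 ≤ ∫ ω, max (Y ω - y) 0 ∂P := integral_nonneg fun ω => le_max_right _ _
        have hEq : q - y ≤ ∫ ω, max (Y ω - y) 0 ∂P := by
          have h1 : (∫ ω, (max (Y ω) 0 - y) ∂P) ≤ ∫ ω, max (Y ω - y) 0 ∂P := by
            refine integral_mono (hqint.sub (integrable_const y)) (hGint y) fun ω => ?_
            rcases le_or_gt y (Y ω) with h | h
            · rw [max_eq_left (by linarith : (0:ℝ) ≤ Y ω - y)]
              rcases le_or_gt 0 (Y ω) with h' | h'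
              · rw [max_eq_left h']
              · rw [max_eq_right h'.le]; linarith
            · have hle : max (Y ω) 0 ≤ y := max_le h.le hy
              have h2 : max (Y ω) 0 - y ≤ 0 := by linarith
              exact le_trans h2 (le_max_right _ _)
          rwa [integral_sub hqint (integrable_const y), integral_const, probReal_univ,
            one_smul, ← hqdef] at h1
        refine le_trans hc1 ?_
        rcases le_or_gt y q with h | h
        · have h2 : a⁻¹ * (q - y) ≤ a⁻¹ * ∫ ω, max (Y ω - y) 0 ∂P :=
            mul_le_mul_of_nonneg_left hEq (by positivity)
          have h3 : 0 ≤ (a⁻¹ - 1) * (q - y) := mul_nonneg (by linarith) (by linarith)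
          nlinarith
        · have h4 : 0 ≤ a⁻¹ * ∫ ω, max (Y ω - y) 0 ∂P := by positivity
          linarith
      · -- y < 0 case
        obtain ⟨b, hbpos, hyb⟩ : ∃ b : ℝ, 0 < b ∧ y = -(b⁻¹) :=
          ⟨(-y)⁻¹, by rw [inv_pos, neg_pos]; exact hy, by field_simp⟩
        have hEeq : (∫ ω, max (Y ω - y) 0 ∂P) = b⁻¹ * f b := by
          rw [hyb]; exact hsubst b hbpos
        have hval : y + a⁻¹ * ∫ ω, max (Y ω - y) 0 ∂P = (f b - a) / (a * b) := by
          rw [hEeq, hyb]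
          field_simp
          ring
        rw [hval]
        have hfb : f bs ≤ f b := hgmin b hbpos.le
        rcases le_or_gt b (2 * a / q) with h | h
        · have hbq : b * q ≤ 2 * a := (le_div_iff₀ hq0).1 h
          refine le_trans hc2 ?_
          rw [div_le_div_iff₀ (by positivity) (by positivity)]
          have p1 := mul_le_mul_of_nonneg_left hbq
            (by positivity : (0:ℝ) ≤ a * (f bs - a))
          have p2 := mul_le_mul_of_nonneg_left hfb
            (by positivity : (0:ℝ) ≤ 2 * a ^ 2)
          nlinarith [p1, p2]
        · have hbq : 2 * a < b * q := by
            rw [div_lt_iff₀ hq0] at h; linarith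
          have hfb2 : b * q ≤ f b := hflow b hbpos.le
          refine le_trans hc3 ?_
          rw [div_le_div_iff₀ (by positivity) (by positivity)]
          have p1 : 0 ≤ a * (b * q - 2 * a) := mul_nonneg ha0.le (by linarith)
          have p2 : 0 ≤ 2 * a * (f b - b * q) := mul_nonneg (by linarith) (by linarith)
          nlinarith [p1, p2]
    have hfinal : c ≤ cvar a Y := by
      rw [hcvar]
      exact le_ciInf hlb
    linarith
  · -- global minimality in the stated form
    intro b hb
    have h := hgmin b hb
    simp only [hfdef, hYdef] at h
    exact h
end

section
/- Let (Ω, 𝓕, P) be a probability space, let Z be an essentially bounded real-valued random variable, and let α ∈ (0, 1]. Then inf_{y ∈ ℝ} ( y + α⁻¹·E[(Z − y)⁺] ) ≤ 0 if and only if there exists y ≤ 0 with y + α⁻¹·E[(Z − y)⁺] ≤ 0, where (z)⁺ := max(z, 0). -/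
open MeasureTheory
open ENNReal

/-- First step of the CVaR satisficing duality: `CVaR_α(Z) ≤ 0`, with
`CVaR_α(Z) = inf_y ( y + α⁻¹ E[(Z − y)⁺] )`, holds iff some nonpositive `y`
witnesses the inequality. -/
theorem cvar_nonpos_iff_witness {Ω : Type*} [MeasurableSpace Ω] (P : Measure Ω)
    [IsProbabilityMeasure P] (Z : Ω → ℝ) (hZ : MemLp Z ⊤ P)
    (α : ℝ) (hα : α ∈ Set.Ioc (0 : ℝ) 1) :
    (⨅ y : ℝ, (y + α⁻¹ * ∫ ω, max (Z ω - y) 0 ∂P)) ≤ 0 ↔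
      ∃ y : ℝ, y ≤ 0 ∧ y + α⁻¹ * (∫ ω, max (Z ω - y) 0 ∂P) ≤ 0 := by
  obtain ⟨hα0, hα1⟩ := hα
  have hαinv : (1 : ℝ) ≤ α⁻¹ := (one_le_inv₀ hα0).2 hα1
  have hαinv0 : (0 : ℝ) < α⁻¹ := by positivity
  set f : ℝ → ℝ := fun y => y + α⁻¹ * ∫ ω, max (Z ω - y) 0 ∂P with hf
  have hZint : Integrable Z P := hZ.integrable le_top
  -- a.e. bound
  set C : ℝ := (eLpNorm Z ⊤ P).toReal + 1 with hC
  have hCbd : ∀ᵐ ω ∂P, |Z ω| ≤ C := by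
    filter_upwards [ae_le_eLpNormEssSup (f := Z) (μ := P)] with ω hω
    have h1 : (‖Z ω‖₊ : ℝ≥0∞) ≤ eLpNorm Z ⊤ P := by
      rw [eLpNorm_exponent_top]; exact_mod_cast hω
    have h2 : eLpNorm Z ⊤ P ≠ ⊤ := hZ.2.ne
    have := ENNReal.toReal_mono h2 h1
    simp only [ENNReal.coe_toReal, coe_nnnorm, Real.norm_eq_abs] at this
    linarith
  have hC0 : 0 ≤ C := by
    have := hCbd.exists.imp (fun ω h => (abs_nonneg _).trans h)
    obtain ⟨ω, hω⟩ := hCbd.exists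
    exact (abs_nonneg _).trans hω
  -- integrability of integrands
  have hint : ∀ y : ℝ, Integrable (fun ω => max (Z ω - y) 0) P := fun y =>
    (hZint.sub (integrable_const y)).pos_part
  have hnn : ∀ y : ℝ, 0 ≤ ∫ ω, max (Z ω - y) 0 ∂P := fun y =>
    integral_nonneg (fun ω => le_max_right _ _)
  have hge : ∀ y : ℝ, y ≤ f y := fun y => by
    have := mul_nonneg hαinv0.le (hnn y); simp [hf]; linarith
  -- Lipschitz: |∫ g_y - ∫ g_y'| ≤ |y - y'|
  have hlip : ∀ y y' : ℝ, |(∫ ω, max (Z ω - y) 0 ∂P) - ∫ ω, max (Z ω - y') 0 ∂P| ≤ |y - y'| := by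
    intro y y'
    rw [← integral_sub (hint y) (hint y')]
    calc |∫ ω, (max (Z ω - y) 0 - max (Z ω - y') 0) ∂P|
        ≤ ∫ ω, |max (Z ω - y) 0 - max (Z ω - y') 0| ∂P := by
          simpa [Real.norm_eq_abs] using
            norm_integral_le_integral_norm (fun ω => max (Z ω - y) 0 - max (Z ω - y') 0) (μ := P)
      _ ≤ ∫ _ω, |y - y'| ∂P := by
          refine integral_mono_of_nonneg (.of_forall fun ω => abs_nonneg _)
            (integrable_const _) (.of_forall fun ω => ?_)
          have h1 : |max (Z ω - y) 0 - max (Z ω - y') 0| ≤ |(Z ω - y) - (Z ω - y')| :=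
            abs_max_sub_max_le_abs _ _ _
          have h2 : (Z ω - y) - (Z ω - y') = y' - y := by ring
          rw [h2] at h1
          simpa [abs_sub_comm y' y] using h1
      _ = |y - y'| := by simp
  have hcont : Continuous f := by
    apply continuous_iff_continuousAt.2
    intro y₀
    rw [Metric.continuousAt_iff]
    intro ε hε
    refine ⟨ε / (1 + α⁻¹), by positivity, fun {y} hy => ?_⟩
    have : dist (f y) (f y₀) ≤ (1 + α⁻¹) * dist y y₀ := by
      simp only [Real.dist_eq, hf]
      have h2 := hlip y y₀
      have : |y + α⁻¹ * ∫ ω, max (Z ω - y) 0 ∂P - (y₀ + α⁻¹ * ∫ ω, max (Z ω - y₀) 0 ∂P)|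
          ≤ |y - y₀| + α⁻¹ * |(∫ ω, max (Z ω - y) 0 ∂P) - ∫ ω, max (Z ω - y₀) 0 ∂P| := by
        have := abs_add_le (y - y₀) (α⁻¹ * ((∫ ω, max (Z ω - y) 0 ∂P) - ∫ ω, max (Z ω - y₀) 0 ∂P))
        rw [abs_mul, abs_of_pos hαinv0] at this
        exact (le_of_eq (by ring)).trans this
      nlinarith [abs_nonneg (y - y₀)]
    calc dist (f y) (f y₀) ≤ (1 + α⁻¹) * dist y y₀ := this
      _ < (1 + α⁻¹) * (ε / (1 + α⁻¹)) := by
          exact mul_lt_mul_of_pos_left hy (by positivity)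
      _ = ε := by field_simp
  -- f(y) for y ≥ C : integral = 0, f(y) = y
  have htop : ∀ y : ℝ, C ≤ y → f y = y := by
    intro y hy
    have : ∫ ω, max (Z ω - y) 0 ∂P = 0 := by
      rw [integral_eq_zero_iff_of_nonneg (f := fun ω => max (Z ω - y) 0) (fun ω => le_max_right _ _) (hint y)]
      filter_upwards [hCbd] with ω hω
      have : Z ω - y ≤ 0 := by have := abs_le.1 hω; linarith
      simp [max_eq_right this]
    simp [hf, this]
  -- f(y) for y ≤ -C : f y = (1 - α⁻¹) y + α⁻¹ ∫ Z
  have hbot : ∀ y : ℝ, y ≤ -C → f y = (1 - α⁻¹) * y + α⁻¹ * ∫ ω, Z ω ∂P := by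
    intro y hy
    have h1 : ∫ ω, max (Z ω - y) 0 ∂P = ∫ ω, (Z ω - y) ∂P := by
      refine integral_congr_ae ?_
      filter_upwards [hCbd] with ω hω
      have : 0 ≤ Z ω - y := by have := abs_le.1 hω; linarith
      simp [max_eq_left this]
    have : ∫ ω, max (Z ω - y) 0 ∂P = (∫ ω, Z ω ∂P) - y := by
      rw [h1, integral_sub hZint (integrable_const y)]; simp
    simp only [hf, this]; ring
  -- min on [-C, C]
  obtain ⟨y₀, hy₀K, hy₀min⟩ := (isCompact_Icc (a := -C) (b := C)).exists_isMinOn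
    (Set.nonempty_Icc.2 (by linarith)) hcont.continuousOn
  have hglobal : ∀ y : ℝ, f y₀ ≤ f y := by
    intro y
    rcases le_or_gt y (-C) with h | h
    · have h1 : f (-C) ≤ f y := by
        rw [hbot y h, hbot (-C) le_rfl]
        have : (1 - α⁻¹) * y ≥ (1 - α⁻¹) * (-C) :=
          mul_le_mul_of_nonpos_left h (by linarith)
        linarith
      exact (hy₀min (Set.mem_Icc.2 ⟨le_rfl, by linarith⟩)).trans h1
    rcases le_or_gt y C with h2 | h2
    · exact hy₀min (Set.mem_Icc.2 ⟨h.le, h2⟩)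
    · have h1 : f C ≤ f y := by rw [htop y h2.le, htop C le_rfl]; exact h2.le
      exact (hy₀min (Set.mem_Icc.2 ⟨by linarith, le_rfl⟩)).trans h1
  have hbdd : BddBelow (Set.range f) := ⟨f y₀, by rintro _ ⟨y, rfl⟩; exact hglobal y⟩
  have hinf : (⨅ y : ℝ, f y) = f y₀ :=
    le_antisymm (ciInf_le hbdd y₀) (le_ciInf hglobal)
  constructor
  · intro h
    rw [hinf] at h
    exact ⟨y₀, (hge y₀).trans h, h⟩
  · rintro ⟨y, _, hy⟩
    exact (ciInf_le hbdd y).trans hy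
end

section
/- Let K ≥ 1, let Q_1, …, Q_K ∈ ℝ and τ ∈ ℝ, and define F(b) := (1/K)·Σ_{k=1}^{K} ( b·(Q_k − τ) + 1 )⁺ for b ≥ 0, where (z)⁺ := max(z, 0). Suppose Σ_{k=1}^{K} (Q_k − τ) < 0 and there exists k with Q_k > τ. Then F attains its minimum over [0, ∞) at some point b* of the form b* = 1/(τ − Q_k) for some index k with Q_k < τ, and F(b*) < 1. -/
open Finset

/-- Second branch of the search algorithm for the sample-average approximation of the
CVaR satisficing problem: if `∑ₖ (Qₖ − τ) < 0` and some `Qₖ > τ`, then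
`F b := (1/K) ∑ₖ (b(Qₖ − τ) + 1)⁺` attains its minimum over `[0,∞)` at a breakpoint
`b* = 1/(τ − Qₖ)` for some `k` with `Qₖ < τ`, and the minimum value is `< 1`. -/
theorem search_algorithm_branch_two (K : ℕ) (hK : 1 ≤ K) (Q : Fin K → ℝ) (τ : ℝ)
    (F : ℝ → ℝ)
    (hF : ∀ b : ℝ, F b = (1 / (K : ℝ)) * ∑ k, max (b * (Q k - τ) + 1) 0)
    (hsum : ∑ k, (Q k - τ) < 0) (hex : ∃ k, τ < Q k) :
    ∃ bstar : ℝ, 0 ≤ bstar ∧ (∃ k, Q k < τ ∧ bstar = 1 / (τ - Q k)) ∧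
      (∀ b : ℝ, 0 ≤ b → F bstar ≤ F b) ∧ F bstar < 1 := by
  have hKpos : (0:ℝ) < K := by exact_mod_cast hK
  set β : Fin K → ℝ := fun k => 1/(τ - Q k) with hβdef
  set S : Finset (Fin K) := Finset.univ.filter (fun k => Q k < τ) with hSdef
  have hSmem : ∀ k, k ∈ S ↔ Q k < τ := by intro k; simp [hSdef]
  have hSne : S.Nonempty := by
    obtain ⟨k, hk⟩ := Finset.exists_lt_of_sum_lt
      (f := fun k => Q k - τ) (g := fun _ => (0:ℝ))
      (by simpa only [Finset.sum_const_zero] using hsum)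
    exact ⟨k, (hSmem k).2 (by linarith)⟩
  have hβpos : ∀ k ∈ S, 0 < β k := by
    intro k hk
    have : Q k < τ := (hSmem k).1 hk
    have h : 0 < τ - Q k := by linarith
    exact one_div_pos.2 h
  have hβmul : ∀ k ∈ S, β k * (τ - Q k) = 1 := by
    intro k hk
    have h : Q k < τ := (hSmem k).1 hk
    show (1/(τ - Q k)) * (τ - Q k) = 1
    exact one_div_mul_cancel (by linarith)
  set B : Finset ℝ := S.image β with hBdef
  have hBne : B.Nonempty := hSne.image β
  obtain ⟨bstar, hbstarB, hbstarmin⟩ := Finset.exists_min_image B F hBne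
  obtain ⟨k0, hk0S, hk0⟩ := Finset.mem_image.1 hbstarB
  have hbstar_pos : 0 < bstar := hk0 ▸ hβpos k0 hk0S
  -- Lemma A: full-linear value
  have lemA : ∀ x : ℝ, 0 ≤ x → (∀ k ∈ S, x ≤ β k) →
      F x = 1 + x * (∑ k, (Q k - τ)) / K := by
    intro x hx hxle
    rw [hF]
    have hterm : ∀ k : Fin K, max (x * (Q k - τ) + 1) 0 = x * (Q k - τ) + 1 := by
      intro k
      apply max_eq_left
      by_cases hk : Q k < τ
      · have hk' : k ∈ S := (hSmem k).2 hk
        have h1 := hβmul k hk'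
        have h2 : x * (τ - Q k) ≤ β k * (τ - Q k) :=
          mul_le_mul_of_nonneg_right (hxle k hk') (by linarith)
        nlinarith
      · push_neg at hk
        nlinarith
    simp only [hterm]
    rw [Finset.sum_add_distrib, ← Finset.mul_sum]
    simp [Finset.card_univ]
    field_simp
    ring
  -- F 0 = 1
  have hF0 : F 0 = 1 := by
    have := lemA 0 le_rfl (fun k hk => (hβpos k hk).le)
    simpa using this
  -- F bstar < 1
  have hFlt : F bstar < 1 := by
    set bm := B.min' hBne with hbm
    have hbmB : bm ∈ B := B.min'_mem hBne
    obtain ⟨km, hkmS, hkm⟩ := Finset.mem_image.1 hbmB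
    have hbmpos : 0 < bm := hkm ▸ hβpos km hkmS
    have hle : ∀ k ∈ S, bm ≤ β k := fun k hk =>
      Finset.min'_le B (β k) (Finset.mem_image_of_mem β hk)
    have hval := lemA bm hbmpos.le hle
    have h1 : F bstar ≤ F bm := hbstarmin bm hbmB
    have : bm * (∑ k, (Q k - τ)) / K < 0 := by
      apply div_neg_of_neg_of_pos _ hKpos
      exact mul_neg_of_pos_of_neg hbmpos hsum
    linarith
  refine ⟨bstar, hbstar_pos.le, ⟨k0, (hSmem k0).1 hk0S, hk0.symm⟩, ?_, hFlt⟩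
  intro b hb
  by_cases hall : ∀ k ∈ S, β k ≤ b
  · -- b beyond all breakpoints: compare with bmax termwise
    set bM := B.max' hBne with hbM
    have hbMB : bM ∈ B := B.max'_mem hBne
    obtain ⟨kM, hkMS, hkM⟩ := Finset.mem_image.1 hbMB
    have hbMle : bM ≤ b := hkM ▸ hall kM hkMS
    have hterm : ∀ k : Fin K,
        max (bM * (Q k - τ) + 1) 0 ≤ max (b * (Q k - τ) + 1) 0 := by
      intro k
      by_cases hk : Q k < τ
      · have hk' : k ∈ S := (hSmem k).2 hk
        have hβle : β k ≤ bM := Finset.le_max' B (β k) (Finset.mem_image_of_mem β hk')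
        have h1 := hβmul k hk'
        have h2 : β k * (τ - Q k) ≤ bM * (τ - Q k) :=
          mul_le_mul_of_nonneg_right hβle (by linarith)
        have : bM * (Q k - τ) + 1 ≤ 0 := by nlinarith
        calc max (bM * (Q k - τ) + 1) 0 = 0 := max_eq_right this
          _ ≤ max (b * (Q k - τ) + 1) 0 := le_max_right _ _
      · push_neg at hk
        apply max_le_max _ le_rfl
        nlinarith
    have hFle : F bM ≤ F b := by
      rw [hF, hF]
      apply mul_le_mul_of_nonneg_left (Finset.sum_le_sum (fun k _ => hterm k))
      positivity
    exact le_trans (hbstarmin bM hbMB) hFle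
  · push_neg at hall
    obtain ⟨kT, hkTS, hkTb⟩ := hall
    set T : Finset (Fin K) := S.filter (fun k => b ≤ β k) with hTdef
    have hTne : T.Nonempty := ⟨kT, Finset.mem_filter.2 ⟨hkTS, hkTb.le⟩⟩
    have hTBne : (T.image β).Nonempty := hTne.image β
    set br := (T.image β).min' hTBne with hbr
    have hbrmem : br ∈ T.image β := Finset.min'_mem _ _
    obtain ⟨kr, hkr, hkrβ⟩ := Finset.mem_image.1 hbrmem
    have hbrB : br ∈ B :=
      Finset.mem_image.2 ⟨kr, (Finset.mem_filter.1 hkr).1, hkrβ⟩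
    have hb_le_br : b ≤ br := by
      apply Finset.le_min'
      intro y hy
      obtain ⟨k, hk, rfl⟩ := Finset.mem_image.1 hy
      exact (Finset.mem_filter.1 hk).2
    set L : Finset ℝ := insert (0:ℝ) ((S.filter (fun k => β k ≤ b)).image β) with hLdef
    have hLne : L.Nonempty := Finset.insert_nonempty _ _
    set bl := L.max' hLne with hbl
    have hblmem : bl ∈ L := Finset.max'_mem _ _
    have hbl_le_b : bl ≤ b := by
      apply Finset.max'_le
      intro y hy
      rcases Finset.mem_insert.1 hy with rfl | hy
      · exact hb
      · obtain ⟨k, hk, rfl⟩ := Finset.mem_image.1 hy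
        exact (Finset.mem_filter.1 hk).2
    have hbl_nonneg : 0 ≤ bl := Finset.le_max' _ 0 (Finset.mem_insert_self _ _)
    have hFbl : F bstar ≤ F bl := by
      rcases Finset.mem_insert.1 hblmem with h0 | hIm
      · rw [h0, hF0]; exact hFlt.le
      · obtain ⟨k, hk, hkβ⟩ := Finset.mem_image.1 hIm
        exact hbstarmin bl (Finset.mem_image.2 ⟨k, (Finset.mem_filter.1 hk).1, hkβ⟩)
    have hFbr : F bstar ≤ F br := hbstarmin br hbrB
    rcases eq_or_lt_of_le (le_trans hbl_le_b hb_le_br) with heq | hlt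
    · -- bl = br, so b = br ∈ B
      have hbeq : b = br := le_antisymm hb_le_br (heq ▸ hbl_le_b)
      rw [hbeq]; exact hFbr
    · set t := (b - bl) / (br - bl) with ht
      have hne : br - bl ≠ 0 := by linarith
      have ht0 : 0 ≤ t := div_nonneg (by linarith) (by linarith)
      have ht1 : t ≤ 1 := by
        rw [div_le_one (by linarith)]; linarith
      have hbeq : b = (1 - t) * bl + t * br := by
        have htm : t * (br - bl) = b - bl := by rw [ht]; exact div_mul_cancel₀ _ hne
        linear_combination (-1 : ℝ) * htm
      have hterm : ∀ k : Fin K,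
          max (b * (Q k - τ) + 1) 0 =
            (1 - t) * max (bl * (Q k - τ) + 1) 0 + t * max (br * (Q k - τ) + 1) 0 := by
        intro k
        by_cases hk : Q k < τ
        · have hk' : k ∈ S := (hSmem k).2 hk
          have h1 := hβmul k hk'
          by_cases hkb : β k ≤ b
          · -- breakpoint left of b: all three terms zero
            have hβbl : β k ≤ bl := by
              apply Finset.le_max'
              exact Finset.mem_insert_of_mem
                (Finset.mem_image_of_mem β (Finset.mem_filter.2 ⟨hk', hkb⟩))
            have hz : ∀ x : ℝ, β k ≤ x → max (x * (Q k - τ) + 1) 0 = 0 := by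
              intro x hx
              apply max_eq_right
              have : β k * (τ - Q k) ≤ x * (τ - Q k) :=
                mul_le_mul_of_nonneg_right hx (by linarith)
              nlinarith
            rw [hz bl hβbl, hz b hkb, hz br (le_trans hβbl (by linarith)), mul_zero,
              mul_zero, add_zero]
          · push_neg at hkb
            have hβbr : br ≤ β k :=
              Finset.min'_le _ (β k)
                (Finset.mem_image_of_mem β (Finset.mem_filter.2 ⟨hk', hkb.le⟩))
            have hnn : ∀ x : ℝ, x ≤ β k → max (x * (Q k - τ) + 1) 0 = x * (Q k - τ) + 1 := by
              intro x hx
              apply max_eq_left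
              have : x * (τ - Q k) ≤ β k * (τ - Q k) :=
                mul_le_mul_of_nonneg_right hx (by linarith)
              nlinarith
            rw [hnn bl (by linarith), hnn b hkb.le, hnn br hβbr, hbeq]
            ring
        · push_neg at hk
          have hnn : ∀ x : ℝ, 0 ≤ x → max (x * (Q k - τ) + 1) 0 = x * (Q k - τ) + 1 := by
            intro x hx
            apply max_eq_left
            nlinarith
          rw [hnn bl hbl_nonneg, hnn b hb, hnn br (by linarith), hbeq]
          ring
      have hFcomb : F b = (1 - t) * F bl + t * F br := by
        rw [hF, hF, hF]
        simp only [hterm]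
        rw [Finset.sum_add_distrib, ← Finset.mul_sum, ← Finset.mul_sum]
        ring
      have h1 : (1 - t) * F bstar ≤ (1 - t) * F bl :=
        mul_le_mul_of_nonneg_left hFbl (by linarith)
      have h2 : t * F bstar ≤ t * F br := mul_le_mul_of_nonneg_left hFbr ht0
      have h3 : (1 - t) * F bstar + t * F bstar = F bstar := by ring
      linarith [hFcomb]
end
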